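/- arXiv:2009.13814 — 2 statements merged into one kernel-verified Lean document; each statement's English description precedes it below -/
import Mathlib

section
/- Local exponential decay for sparse operators: there exist c₁, c₂ > 0 such that for every sparse family 𝒮 of dyadic cubes, every cube Q₀, all f₁,…,f_m ∈ L^∞_c supported in Q₀, and all t > 0, |{x ∈ Q₀ : 𝒜²_𝒮(f⃗)(x) > t ℳ(f⃗)(x)}| ≤ c₁ e^{−c₂ t²} |Q₀|, where 𝒜²_𝒮(f⃗)(x) = ( ∑_{Q ∈ 𝒮} ∏_{i=1}^m ⟨|f_i|⟩_Q² 1_Q(x) )^{1/2}. -/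
open MeasureTheory Set Filter ENNReal

noncomputable section

/-- `Q ⊆ ℝⁿ` is a cube (axis-parallel, with positive side length). -/
def IsCube {n : ℕ} (Q : Set (Fin n → ℝ)) : Prop :=
  ∃ (a : Fin n → ℝ) (h : ℝ), 0 < h ∧ Q = Set.univ.pi fun i => Set.Ico (a i) (a i + h)

/-- A dyadic grid: a countable family of cubes, any two of which are nested or disjoint. -/
def IsDyadicGrid {n : ℕ} (𝒟 : Set (Set (Fin n → ℝ))) : Prop :=
  (∀ Q ∈ 𝒟, IsCube Q) ∧
  (∀ Q ∈ 𝒟, ∀ Q' ∈ 𝒟, Q ⊆ Q' ∨ Q' ⊆ Q ∨ Q ∩ Q' = ∅) ∧ 𝒟.Countable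

/-- `𝒮` is `η`-sparse. -/
def IsSparse {n : ℕ} (η : ℝ) (𝒮 : Set (Set (Fin n → ℝ))) : Prop :=
  ∃ E : Set (Fin n → ℝ) → Set (Fin n → ℝ),
    (∀ Q ∈ 𝒮, E Q ⊆ Q ∧ MeasurableSet (E Q) ∧ ENNReal.ofReal η * volume Q ≤ volume (E Q)) ∧
    𝒮.Pairwise fun Q Q' => Disjoint (E Q) (E Q')

/-- An `η`-sparse family of dyadic cubes. -/
def IsSparseDyadic {n : ℕ} (η : ℝ) (𝒮 : Set (Set (Fin n → ℝ))) : Prop :=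
  IsSparse η 𝒮 ∧ ∃ 𝒟, IsDyadicGrid 𝒟 ∧ 𝒮 ⊆ 𝒟

/-- The average `⟨w⟩_Q = (1/|Q|) ∫_Q w`. -/
def lavg {n : ℕ} (w : (Fin n → ℝ) → ℝ≥0∞) (Q : Set (Fin n → ℝ)) : ℝ≥0∞ :=
  (∫⁻ x in Q, w x) / volume Q

/-- The sparse square operator `𝒜²_𝒮(f⃗)(x) = (∑_{Q∈𝒮} ∏ᵢ ⟨|fᵢ|⟩_Q² 1_Q(x))^{1/2}`. -/
def sparseSq {n m : ℕ} (𝒮 : Set (Set (Fin n → ℝ)))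
    (f : Fin m → (Fin n → ℝ) → ℝ) (x : Fin n → ℝ) : ℝ≥0∞ :=
  (∑' Q : 𝒮, (Q : Set (Fin n → ℝ)).indicator
      (fun _ => ∏ i, lavg (fun y => ENNReal.ofReal |f i y|) Q.1 ^ 2) x) ^ ((1 : ℝ) / 2)

/-- The multilinear maximal function `ℳ(f⃗)(x) = sup_{Q ∋ x} ∏ᵢ ⟨|fᵢ|⟩_Q`. -/
def multiMax {n m : ℕ} (f : Fin m → (Fin n → ℝ) → ℝ) (x : Fin n → ℝ) : ℝ≥0∞ :=
  ⨆ (Q : Set (Fin n → ℝ)) (_ : IsCube Q) (_ : x ∈ Q),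
    ∏ i, lavg (fun y => ENNReal.ofReal |f i y|) Q

namespace SparseAux
open Classical

section
variable {n m : ℕ} {𝒮 S' : Set (Set (Fin n → ℝ))} {E : Set (Fin n → ℝ) → Set (Fin n → ℝ)} {η : ℝ}
variable {f : Fin m → (Fin n → ℝ) → ℝ} {x : Fin n → ℝ}

lemma cube_volume {a : Fin n → ℝ} {h : ℝ} :
    volume (Set.univ.pi fun i => Set.Ico (a i) (a i + h)) = ENNReal.ofReal h ^ n := by
  rw [volume_pi_pi]
  simp [Real.volume_Ico]


lemma cube_nonempty {Q : Set (Fin n → ℝ)} (hQ : IsCube Q) : Q.Nonempty := by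
  obtain ⟨a, h, hh, rfl⟩ := hQ
  exact ⟨a, fun i _ => ⟨le_refl _, by linarith⟩⟩


lemma IsCube.vol_pos {Q : Set (Fin n → ℝ)} (hQ : IsCube Q) : 0 < volume Q := by
  obtain ⟨a, h, hh, rfl⟩ := hQ
  rw [cube_volume]
  exact ENNReal.pow_pos (ENNReal.ofReal_pos.2 hh) n


lemma IsCube.vol_lt_top {Q : Set (Fin n → ℝ)} (hQ : IsCube Q) : volume Q < ⊤ := by
  obtain ⟨a, h, hh, rfl⟩ := hQ
  rw [cube_volume]
  exact ENNReal.pow_lt_top ENNReal.ofReal_lt_top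


lemma IsCube.measurableSet {Q : Set (Fin n → ℝ)} (hQ : IsCube Q) : MeasurableSet Q := by
  obtain ⟨a, h, hh, rfl⟩ := hQ
  exact MeasurableSet.univ_pi fun i => measurableSet_Ico


lemma chain_min {α : Type*} (F : Finset (Set α))
    (hc : ∀ a ∈ F, ∀ b ∈ F, a ⊆ b ∨ b ⊆ a) (hne : F.Nonempty) :
    ∃ Q ∈ F, ∀ P ∈ F, Q ⊆ P := by
  classical
  induction F using Finset.induction_on with
  | empty => exact absurd hne (by simp)
  | @insert a F' hnotmem ih =>
    rcases F'.eq_empty_or_nonempty with rfl | hne'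
    · exact ⟨a, by simp, by simp⟩
    · obtain ⟨m, hmF, hmin⟩ := ih (fun x hx y hy => hc x (Finset.mem_insert_of_mem hx) y
        (Finset.mem_insert_of_mem hy)) hne'
      rcases hc a (Finset.mem_insert_self a F') m (Finset.mem_insert_of_mem hmF) with ham | hma
      · exact ⟨a, Finset.mem_insert_self a F', fun P hP => by
          rcases Finset.mem_insert.1 hP with rfl | hP'
          · exact subset_rfl
          · exact ham.trans (hmin P hP')⟩
      · exact ⟨m, Finset.mem_insert_of_mem hmF, fun P hP => by
          rcases Finset.mem_insert.1 hP with rfl | hP'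
          · exact hma
          · exact hmin P hP'⟩


lemma chain_max {α : Type*} (F : Finset (Set α))
    (hc : ∀ a ∈ F, ∀ b ∈ F, a ⊆ b ∨ b ⊆ a) (hne : F.Nonempty) :
    ∃ Q ∈ F, ∀ P ∈ F, P ⊆ Q := by
  classical
  induction F using Finset.induction_on with
  | empty => exact absurd hne (by simp)
  | @insert a F' hnotmem ih =>
    rcases F'.eq_empty_or_nonempty with rfl | hne'
    · exact ⟨a, by simp, by simp⟩
    · obtain ⟨m, hmF, hmax⟩ := ih (fun x hx y hy => hc x (Finset.mem_insert_of_mem hx) y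
        (Finset.mem_insert_of_mem hy)) hne'
      rcases hc a (Finset.mem_insert_self a F') m (Finset.mem_insert_of_mem hmF) with ham | hma
      · exact ⟨m, Finset.mem_insert_of_mem hmF, fun P hP => by
          rcases Finset.mem_insert.1 hP with rfl | hP'
          · exact ham
          · exact hmax P hP'⟩
      · exact ⟨a, Finset.mem_insert_self a F', fun P hP => by
          rcases Finset.mem_insert.1 hP with rfl | hP'
          · exact subset_rfl
          · exact (hmax P hP').trans hma⟩


/-- cubes of `S'` having at least `s` supersets (incl. itself) inside `S'`. -/
def Dset (S' : Set (Set (Fin n → ℝ))) (s : ℕ) : Set (Set (Fin n → ℝ)) :=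
  {Q | ∃ F : Finset (Set (Fin n → ℝ)), ↑F ⊆ S' ∧ s ≤ F.card ∧ Q ∈ F ∧ ∀ P ∈ F, Q ⊆ P}

lemma Dset_subset {S' : Set (Set (Fin n → ℝ))} {s : ℕ} : Dset S' s ⊆ S' := by
  rintro Q ⟨F, hF, -, hQF, -⟩; exact hF hQF


lemma ancestors_card (S' : Set (Set (Fin n → ℝ)))
    (hgrid : ∀ Q ∈ S', ∀ Q' ∈ S', Q ⊆ Q' ∨ Q' ⊆ Q ∨ Q ∩ Q' = ∅)
    (hne : ∀ Q ∈ S', Q.Nonempty)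
    {a b : ℕ} (ha : 1 ≤ a) {Q : Set (Fin n → ℝ)} (hQ : Q ∈ Dset S' (a + b)) :
    ∃ G : Finset (Set (Fin n → ℝ)), b ≤ G.card ∧
      ∀ P ∈ G, P ∈ Dset S' a ∧ Q ⊆ P ∧ Q ≠ P := by
  classical
  obtain ⟨F, hFS, hcard, hQF, hQsub⟩ := hQ
  obtain ⟨z, hz⟩ := hne Q (hFS hQF)
  have hFc : ∀ P ∈ F, ∀ P' ∈ F, P ⊆ P' ∨ P' ⊆ P := by
    intro P hP P' hP'
    rcases hgrid P (hFS hP) P' (hFS hP') with h | h | h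
    · exact Or.inl h
    · exact Or.inr h
    · exfalso
      have : z ∈ P ∩ P' := ⟨hQsub P hP hz, hQsub P' hP' hz⟩
      rw [h] at this
      exact this
  set High := F.filter (fun P => (F.filter (fun R => P ⊆ R)).card < a) with hHighdef
  have hHighcard : High.card ≤ a - 1 := by
    rcases High.eq_empty_or_nonempty with he | hne'
    · simp [he]
    · obtain ⟨P₀, hP₀, hmin⟩ := chain_min High
        (fun x hx y hy => hFc x (Finset.filter_subset _ _ hx) y (Finset.filter_subset _ _ hy))
        hne'
      have h1 : High ⊆ F.filter (fun R => P₀ ⊆ R) := by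
        intro P hP
        exact Finset.mem_filter.2 ⟨Finset.filter_subset _ _ hP, hmin P hP⟩
      have h2 : (F.filter (fun R => P₀ ⊆ R)).card < a := (Finset.mem_filter.1 hP₀).2
      exact Nat.le_sub_one_of_lt (lt_of_le_of_lt (Finset.card_le_card h1) h2)
  refine ⟨(F.erase Q).filter (fun P => a ≤ (F.filter (fun R => P ⊆ R)).card), ?_, ?_⟩
  · have hneg : (F.erase Q).filter (fun P => ¬ a ≤ (F.filter (fun R => P ⊆ R)).card) ⊆ High := by
      intro P hP
      rw [Finset.mem_filter] at hP ⊢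
      exact ⟨Finset.mem_of_mem_erase hP.1, by omega⟩
    have := Finset.card_filter_add_card_filter_not
      (s := F.erase Q) (p := fun P => a ≤ (F.filter (fun R => P ⊆ R)).card)
    have hnegc : ((F.erase Q).filter (fun P => ¬ a ≤ (F.filter (fun R => P ⊆ R)).card)).card
        ≤ a - 1 := le_trans (Finset.card_le_card hneg) hHighcard
    have herase : (F.erase Q).card = F.card - 1 := Finset.card_erase_of_mem hQF
    omega
  · intro P hP
    rw [Finset.mem_filter] at hP
    obtain ⟨hPe, hPc⟩ := hP
    have hPF : P ∈ F := Finset.mem_of_mem_erase hPe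
    refine ⟨⟨F.filter (fun R => P ⊆ R), ?_, hPc, ?_, ?_⟩, hQsub P hPF, ?_⟩
    · exact fun R hR => hFS (Finset.filter_subset _ _ hR)
    · exact Finset.mem_filter.2 ⟨hPF, subset_rfl⟩
    · exact fun R hR => (Finset.mem_filter.1 hR).2
    · exact fun h => (Finset.ne_of_mem_erase hPe) h.symm


/-- master disjointness estimate -/
lemma tsum_vol_le (hcnt : 𝒮.Countable)
    (hE1 : ∀ Q ∈ 𝒮, E Q ⊆ Q ∧ MeasurableSet (E Q) ∧
      ENNReal.ofReal η * volume Q ≤ volume (E Q))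
    (hE2 : 𝒮.Pairwise fun Q Q' => Disjoint (E Q) (E Q'))
    (T : Set (Fin n → ℝ)) (g : ↥𝒮 → ℝ≥0∞)
    (hg : ∀ Q : ↥𝒮, g Q = 0 ∨ (g Q = volume (E ↑Q) ∧ E ↑Q ⊆ T)) :
    (∑' Q : ↥𝒮, g Q) ≤ volume T := by
  have := hcnt.to_subtype
  set E' : ↥𝒮 → Set (Fin n → ℝ) := fun Q => if g Q = 0 then ∅ else E ↑Q with hE'
  have hE'app : ∀ Q, E' Q = if g Q = 0 then ∅ else E ↑Q := fun _ => rfl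
  have hgE : ∀ Q, g Q = volume (E' Q) := by
    intro Q
    by_cases h : g Q = 0
    · rw [hE'app, if_pos h, h]; simp
    · rcases hg Q with h0 | ⟨h1, -⟩
      · exact absurd h0 h
      · rw [hE'app, if_neg h, h1]
  have hsub : ∀ Q, E' Q ⊆ T := by
    intro Q
    by_cases h : g Q = 0
    · rw [hE'app, if_pos h]; exact empty_subset T
    · rcases hg Q with h0 | ⟨-, h2⟩
      · exact absurd h0 h
      · rw [hE'app, if_neg h]; exact h2
  calc (∑' Q : ↥𝒮, g Q) = ∑' Q : ↥𝒮, volume (E' Q) := tsum_congr hgE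
    _ = volume (⋃ Q : ↥𝒮, E' Q) := by
        refine (measure_iUnion ?_ ?_).symm
        · intro Q Q' hQQ'
          have hvne : (Q : Set (Fin n → ℝ)) ≠ ↑Q' := Subtype.coe_injective.ne hQQ'
          have hd := hE2 Q.2 Q'.2 hvne
          dsimp only [Function.onFun]
          rw [hE'app, hE'app]
          split <;> split <;> simp [hd]
        · intro Q
          rw [hE'app]
          split
          · exact MeasurableSet.empty
          · exact (hE1 _ Q.2).2.1
    _ ≤ volume T := measure_mono (iUnion_subset hsub)


open Classical in
def Bsum (𝒮 S' : Set (Set (Fin n → ℝ))) (E : Set (Fin n → ℝ) → Set (Fin n → ℝ)) (s : ℕ) :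
    ℝ≥0∞ :=
  ∑' Q : ↥𝒮, if (Q : Set (Fin n → ℝ)) ∈ Dset S' s then volume (E ↑Q) else 0


lemma vol_le_inv_mul (hη : 0 < η)
    (hE1 : ∀ Q ∈ 𝒮, E Q ⊆ Q ∧ MeasurableSet (E Q) ∧
      ENNReal.ofReal η * volume Q ≤ volume (E Q))
    {Q : Set (Fin n → ℝ)} (hQ : Q ∈ 𝒮) :
    volume Q ≤ (ENNReal.ofReal η)⁻¹ * volume (E Q) := by
  have h := (hE1 Q hQ).2.2
  calc volume Q = (ENNReal.ofReal η)⁻¹ * (ENNReal.ofReal η * volume Q) := by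
        rw [← mul_assoc, ENNReal.inv_mul_cancel (ENNReal.ofReal_pos.2 hη).ne'
          ENNReal.ofReal_ne_top, one_mul]
    _ ≤ (ENNReal.ofReal η)⁻¹ * volume (E Q) := mul_le_mul_right h _


lemma Bsum_anti {s s' : ℕ} (h : s ≤ s') : Bsum 𝒮 S' E s' ≤ Bsum 𝒮 S' E s := by
  refine Summable.tsum_le_tsum (fun Q => ?_) ENNReal.summable ENNReal.summable
  split
  · next hmem =>
      rw [if_pos]
      obtain ⟨F, hF, hcard, hQF, hsub⟩ := hmem
      exact ⟨F, hF, h.trans hcard, hQF, hsub⟩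
  · simp


lemma Bsum_rec (hη : 0 < η) (hcnt : 𝒮.Countable)
    (hE1 : ∀ Q ∈ 𝒮, E Q ⊆ Q ∧ MeasurableSet (E Q) ∧
      ENNReal.ofReal η * volume Q ≤ volume (E Q))
    (hE2 : 𝒮.Pairwise fun Q Q' => Disjoint (E Q) (E Q'))
    (hS' : S' ⊆ 𝒮)
    (hgrid : ∀ Q ∈ S', ∀ Q' ∈ S', Q ⊆ Q' ∨ Q' ⊆ Q ∨ Q ∩ Q' = ∅)
    (hne : ∀ Q ∈ S', Q.Nonempty)
    (a b : ℕ) (ha : 1 ≤ a) :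
    (b : ℝ≥0∞) * Bsum 𝒮 S' E (a + b) ≤ (ENNReal.ofReal η)⁻¹ * Bsum 𝒮 S' E a := by
  have := hcnt.to_subtype
  set ψ : ↥𝒮 → ↥𝒮 → ℝ≥0∞ := fun Q P =>
    if ((Q : Set (Fin n → ℝ)) ∈ Dset S' (a + b) ∧ (P : Set (Fin n → ℝ)) ∈ Dset S' a ∧
        (Q : Set (Fin n → ℝ)) ⊆ ↑P ∧ (Q : Set (Fin n → ℝ)) ≠ ↑P)
      then volume (E ↑Q) else 0 with hψ
  have hψa : ∀ Q P : ↥𝒮, ψ Q P =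
      if ((Q : Set (Fin n → ℝ)) ∈ Dset S' (a + b) ∧ (P : Set (Fin n → ℝ)) ∈ Dset S' a ∧
        (Q : Set (Fin n → ℝ)) ⊆ ↑P ∧ (Q : Set (Fin n → ℝ)) ≠ ↑P)
      then volume (E ↑Q) else 0 := fun _ _ => rfl
  have step1 : ∀ Q : ↥𝒮,
      (b : ℝ≥0∞) * (if (Q : Set (Fin n → ℝ)) ∈ Dset S' (a + b) then volume (E ↑Q) else 0)
        ≤ ∑' P : ↥𝒮, ψ Q P := by
    intro Q
    by_cases hQ : (Q : Set (Fin n → ℝ)) ∈ Dset S' (a + b)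
    · rw [if_pos hQ]
      obtain ⟨G, hGcard, hG⟩ := ancestors_card S' hgrid hne ha hQ
      have hG𝒮 : ∀ P ∈ G, P ∈ 𝒮 := fun P hP => hS' (Dset_subset (hG P hP).1)
      set G' : Finset ↥𝒮 := G.subtype (· ∈ 𝒮) with hG'
      have hG'card : G'.card = G.card := by
        rw [hG', Finset.card_subtype, Finset.filter_true_of_mem hG𝒮]
      calc (b : ℝ≥0∞) * volume (E ↑Q)
          ≤ (G'.card : ℝ≥0∞) * volume (E ↑Q) := by
            exact mul_le_mul_left (Nat.cast_le.2 (hG'card ▸ hGcard)) _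
        _ = ∑ P ∈ G', ψ Q P := by
            rw [Finset.sum_congr rfl (fun P hP => ?_), Finset.sum_const, nsmul_eq_mul]
            rw [hψa]
            have hPG : (P : Set (Fin n → ℝ)) ∈ G := by
              have := Finset.mem_subtype.1 (hG' ▸ hP)
              exact this
            obtain ⟨h1, h2, h3⟩ := hG P hPG
            rw [if_pos ⟨hQ, h1, h2, h3⟩]
        _ ≤ ∑' P : ↥𝒮, ψ Q P := ENNReal.sum_le_tsum G'
    · rw [if_neg hQ]
      simp
  calc (b : ℝ≥0∞) * Bsum 𝒮 S' E (a + b)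
      = ∑' Q : ↥𝒮, (b : ℝ≥0∞) *
          (if (Q : Set (Fin n → ℝ)) ∈ Dset S' (a + b) then volume (E ↑Q) else 0) :=
        (ENNReal.tsum_mul_left).symm
    _ ≤ ∑' Q : ↥𝒮, ∑' P : ↥𝒮, ψ Q P :=
        Summable.tsum_le_tsum step1 ENNReal.summable ENNReal.summable
    _ = ∑' P : ↥𝒮, ∑' Q : ↥𝒮, ψ Q P := ENNReal.tsum_comm
    _ ≤ ∑' P : ↥𝒮, (if (P : Set (Fin n → ℝ)) ∈ Dset S' a
          then (ENNReal.ofReal η)⁻¹ * volume (E ↑P) else 0) := by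
        refine Summable.tsum_le_tsum (fun P => ?_) ENNReal.summable ENNReal.summable
        by_cases hP : (P : Set (Fin n → ℝ)) ∈ Dset S' a
        · rw [if_pos hP]
          have h1 : (∑' Q : ↥𝒮, ψ Q P) ≤ volume (P : Set (Fin n → ℝ)) := by
            refine tsum_vol_le hcnt hE1 hE2 _ _ (fun Q => ?_)
            rw [hψa]
            split
            · next hc => exact Or.inr ⟨rfl, le_trans (hE1 _ Q.2).1 hc.2.2.1⟩
            · exact Or.inl rfl
          exact h1.trans (vol_le_inv_mul hη hE1 (hS' (Dset_subset hP)))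
        · rw [if_neg hP]
          have : ∀ Q : ↥𝒮, ψ Q P = 0 := by
            intro Q; rw [hψa, if_neg]; rintro ⟨-, h, -⟩; exact hP h
          simp [this]
    _ = (ENNReal.ofReal η)⁻¹ * Bsum 𝒮 S' E a := by
        rw [Bsum, ← ENNReal.tsum_mul_left]
        exact tsum_congr fun P => by split <;> simp

lemma Bsum_decay (hη : 0 < η) (hcnt : 𝒮.Countable)
    (hE1 : ∀ Q ∈ 𝒮, E Q ⊆ Q ∧ MeasurableSet (E Q) ∧
      ENNReal.ofReal η * volume Q ≤ volume (E Q))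
    (hE2 : 𝒮.Pairwise fun Q Q' => Disjoint (E Q) (E Q'))
    (hS' : S' ⊆ 𝒮)
    (hgrid : ∀ Q ∈ S', ∀ Q' ∈ S', Q ⊆ Q' ∨ Q' ⊆ Q ∨ Q ∩ Q' = ∅)
    (hne : ∀ Q ∈ S', Q.Nonempty) (j : ℕ) :
    Bsum 𝒮 S' E (1 + j * ⌈2/η⌉₊) ≤ (2 : ℝ≥0∞)⁻¹ ^ j * Bsum 𝒮 S' E 1 := by
  set b₀ : ℕ := ⌈2/η⌉₊ with hb₀
  have hb₀pos : 0 < b₀ := Nat.ceil_pos.2 (by positivity)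
  have hb₀ne : (b₀ : ℝ≥0∞) ≠ 0 := by exact_mod_cast hb₀pos.ne'
  have hb₀top : (b₀ : ℝ≥0∞) ≠ ⊤ := ENNReal.natCast_ne_top _
  have hkey : (b₀ : ℝ≥0∞)⁻¹ * (ENNReal.ofReal η)⁻¹ ≤ 2⁻¹ := by
    rw [← ENNReal.mul_inv (Or.inl hb₀ne) (Or.inl hb₀top)]
    refine ENNReal.inv_le_inv.2 ?_
    have h2 : (2 : ℝ≥0∞) = ENNReal.ofReal η * ENNReal.ofReal (2/η) := by
      rw [← ENNReal.ofReal_mul hη.le]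
      rw [mul_div_cancel₀ _ hη.ne']
      norm_num
    rw [h2, mul_comm (b₀:ℝ≥0∞) _]
    refine mul_le_mul_right ?_ _
    calc ENNReal.ofReal (2/η) ≤ ENNReal.ofReal (b₀ : ℝ) :=
          ENNReal.ofReal_le_ofReal (Nat.le_ceil _)
      _ = (b₀ : ℝ≥0∞) := ENNReal.ofReal_natCast b₀
  induction j with
  | zero => simp
  | succ j ih =>
      have harec := Bsum_rec hη hcnt hE1 hE2 hS' hgrid hne (1 + j * b₀) b₀ (by omega)
      have hstep : Bsum 𝒮 S' E (1 + (j+1) * b₀) ≤ 2⁻¹ * Bsum 𝒮 S' E (1 + j * b₀) := by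
        have hidx : 1 + (j+1) * b₀ = (1 + j * b₀) + b₀ := by ring
        rw [hidx]
        calc Bsum 𝒮 S' E ((1 + j * b₀) + b₀)
            = (b₀ : ℝ≥0∞)⁻¹ * ((b₀ : ℝ≥0∞) * Bsum 𝒮 S' E ((1 + j * b₀) + b₀)) := by
              rw [← mul_assoc, ENNReal.inv_mul_cancel hb₀ne hb₀top, one_mul]
          _ ≤ (b₀ : ℝ≥0∞)⁻¹ * ((ENNReal.ofReal η)⁻¹ * Bsum 𝒮 S' E (1 + j * b₀)) :=
              mul_le_mul_right harec _
          _ = ((b₀ : ℝ≥0∞)⁻¹ * (ENNReal.ofReal η)⁻¹) * Bsum 𝒮 S' E (1 + j * b₀) := by ring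
          _ ≤ 2⁻¹ * Bsum 𝒮 S' E (1 + j * b₀) := mul_le_mul_left hkey _
      calc Bsum 𝒮 S' E (1 + (j+1) * b₀) ≤ 2⁻¹ * Bsum 𝒮 S' E (1 + j * b₀) := hstep
        _ ≤ 2⁻¹ * ((2:ℝ≥0∞)⁻¹ ^ j * Bsum 𝒮 S' E 1) := mul_le_mul_right ih _
        _ = (2:ℝ≥0∞)⁻¹ ^ (j+1) * Bsum 𝒮 S' E 1 := by ring


lemma prod_lavg_le_multiMax {Q : Set (Fin n → ℝ)} (hQ : IsCube Q) (hx : x ∈ Q) :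
    (∏ i, lavg (fun y => ENNReal.ofReal |f i y|) Q) ≤ multiMax f x :=
  le_iSup_of_le Q (le_iSup_of_le hQ (le_iSup_of_le hx le_rfl))

lemma multiMax_le_prod (M : Fin m → ℝ) (hM : ∀ i x, |f i x| ≤ M i) :
    multiMax f x ≤ ∏ i, ENNReal.ofReal (M i) := by
  refine iSup_le fun Q => iSup_le fun hQ => iSup_le fun hx => ?_
  refine Finset.prod_le_prod' fun i _ => ?_
  refine div_le_of_le_mul ?_
  calc (∫⁻ y in Q, ENNReal.ofReal |f i y|)
      ≤ ∫⁻ y in Q, ENNReal.ofReal (M i) :=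
        lintegral_mono fun y => ENNReal.ofReal_le_ofReal (hM i y)
    _ = ENNReal.ofReal (M i) * volume Q := setLIntegral_const _ _

lemma multiMax_ne_top (M : Fin m → ℝ) (hM : ∀ i x, |f i x| ≤ M i) :
    multiMax f x ≠ ⊤ := by
  refine ne_top_of_le_ne_top ?_ (multiMax_le_prod M hM)
  exact (prod_lt_top fun i _ => ENNReal.ofReal_lt_top).ne

/-- support inside `Q₀` integral comparison -/
lemma setLIntegral_le_of_support {Q₀ Q : Set (Fin n → ℝ)} (hQ₀m : MeasurableSet Q₀)
    (w : (Fin n → ℝ) → ℝ≥0∞) (hsupp : ∀ y, y ∉ Q₀ → w y = 0) :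
    (∫⁻ y in Q, w y) ≤ ∫⁻ y in Q₀, w y := by
  have hw : w = Q₀.indicator w := by
    funext y
    by_cases hy : y ∈ Q₀
    · rw [Set.indicator_of_mem hy]
    · rw [Set.indicator_of_notMem hy, hsupp y hy]
  calc (∫⁻ y in Q, w y) ≤ ∫⁻ y, w y := setLIntegral_le_lintegral _ _
    _ = ∫⁻ y, Q₀.indicator w y := by rw [← hw]
    _ = ∫⁻ y in Q₀, w y := lintegral_indicator hQ₀m _

lemma lavg_le_shrink {Q₀ Q : Set (Fin n → ℝ)} (hQ₀m : MeasurableSet Q₀)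
    (h0 : volume Q₀ ≠ 0) (htop : volume Q₀ ≠ ⊤)
    (w : (Fin n → ℝ) → ℝ≥0∞) (hsupp : ∀ y, y ∉ Q₀ → w y = 0) :
    lavg w Q ≤ lavg w Q₀ * (volume Q₀ / volume Q) := by
  have h1 : (∫⁻ y in Q₀, w y) = lavg w Q₀ * volume Q₀ := by
    rw [lavg, ENNReal.div_mul_cancel h0 htop]
  calc lavg w Q = (∫⁻ y in Q, w y) / volume Q := rfl
    _ ≤ (∫⁻ y in Q₀, w y) / volume Q :=
        ENNReal.div_le_div_right (setLIntegral_le_of_support hQ₀m w hsupp) _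
    _ = lavg w Q₀ * volume Q₀ / volume Q := by rw [h1]
    _ = lavg w Q₀ * (volume Q₀ / volume Q) := by rw [mul_div_assoc]

lemma prod_lavg_big_le (hm : 0 < m) {Q₀ Q : Set (Fin n → ℝ)} (hQ₀ : IsCube Q₀)
    (hQ₀m : MeasurableSet Q₀) (h0 : volume Q₀ ≠ 0) (htop : volume Q₀ ≠ ⊤)
    (hx0 : x ∈ Q₀) (hsupp : ∀ i y, y ∉ Q₀ → f i y = 0)
    (hbig : volume Q₀ ≤ volume Q) :
    (∏ i, lavg (fun y => ENNReal.ofReal |f i y|) Q)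
      ≤ (volume Q₀ / volume Q) * multiMax f x := by
  have hle1 : volume Q₀ / volume Q ≤ 1 := div_le_of_le_mul (by rwa [one_mul])
  calc (∏ i, lavg (fun y => ENNReal.ofReal |f i y|) Q)
      ≤ ∏ i, (lavg (fun y => ENNReal.ofReal |f i y|) Q₀ * (volume Q₀ / volume Q)) := by
        refine Finset.prod_le_prod' fun i _ => ?_
        refine lavg_le_shrink hQ₀m h0 htop _ fun y hy => ?_
        rw [hsupp i y hy]; simp
    _ = (∏ i, lavg (fun y => ENNReal.ofReal |f i y|) Q₀) * (volume Q₀ / volume Q) ^ m := by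
        rw [Finset.prod_mul_distrib, Finset.prod_const, Finset.card_univ, Fintype.card_fin]
    _ ≤ multiMax f x * (volume Q₀ / volume Q) ^ 1 :=
        mul_le_mul' (prod_lavg_le_multiMax hQ₀ hx0)
          (pow_le_pow_of_le_one zero_le hle1 hm)
    _ = (volume Q₀ / volume Q) * multiMax f x := by rw [pow_one, mul_comm]

/-- real series bound -/
lemma sum_inv_sq_le (k : ℕ) :
    ∑ j ∈ Finset.range k, (1/((j:ℝ)+1))^2 ≤ 2 - 2/((k:ℝ)+1) := by
  induction k with
  | zero => norm_num
  | succ k ih =>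
      rw [Finset.sum_range_succ]
      have hk1 : (0:ℝ) < (k:ℝ) + 1 := by positivity
      have hk2 : (0:ℝ) < (k:ℝ) + 2 := by positivity
      have key : (1/((k:ℝ)+1))^2 ≤ 2/((k:ℝ)+1) - 2/((k:ℝ)+2) := by
        rw [div_sub_div _ _ hk1.ne' hk2.ne', div_pow, div_le_div_iff₀ (by positivity) (by positivity)]
        ring_nf
        nlinarith [sq_nonneg ((k:ℝ)+1)]
      push_cast
      have h3 : ((k:ℝ)+1+1) = (k:ℝ)+2 := by ring
      rw [h3]
      linarith [ih]


lemma Ck_le (hη : 0 < η) (k : ℕ) :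
    (∑ j ∈ Finset.range k, ((((j:ℕ)+1 : ℝ≥0∞) * ENNReal.ofReal η)⁻¹)^2)
      ≤ ENNReal.ofReal (2/η^2) := by
  have hterm : ∀ j : ℕ, ((((j:ℕ)+1 : ℝ≥0∞) * ENNReal.ofReal η)⁻¹)^2
      = ENNReal.ofReal ((1/(((j:ℝ)+1)*η))^2) := by
    intro j
    have hpos : (0:ℝ) < ((j:ℝ)+1)*η := by positivity
    rw [ENNReal.ofReal_pow (by positivity), one_div, ENNReal.ofReal_inv_of_pos hpos,
      ENNReal.ofReal_mul (by positivity)]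
    congr 2
    rw [← ENNReal.ofReal_natCast j, ← ENNReal.ofReal_one, ← ENNReal.ofReal_add (by positivity)
      (by norm_num)]
  calc (∑ j ∈ Finset.range k, ((((j:ℕ)+1 : ℝ≥0∞) * ENNReal.ofReal η)⁻¹)^2)
      = ∑ j ∈ Finset.range k, ENNReal.ofReal ((1/(((j:ℝ)+1)*η))^2) :=
        Finset.sum_congr rfl fun j _ => hterm j
    _ = ENNReal.ofReal (∑ j ∈ Finset.range k, (1/(((j:ℝ)+1)*η))^2) :=
        (ofReal_sum_of_nonneg fun j _ => by positivity).symm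
    _ ≤ ENNReal.ofReal (2/η^2) := by
        refine ENNReal.ofReal_le_ofReal ?_
        have heq : ∀ j : ℕ, (1/(((j:ℝ)+1)*η))^2 = (1/((j:ℝ)+1))^2 * (1/η^2) := by
          intro j; field_simp
        rw [Finset.sum_congr rfl fun j _ => heq j, ← Finset.sum_mul]
        have h1 : (∑ j ∈ Finset.range k, (1/((j:ℝ)+1))^2) ≤ 2 := by
          have := sum_inv_sq_le k
          have h2 : (0:ℝ) ≤ 2/((k:ℝ)+1) := by positivity
          linarith
        calc (∑ j ∈ Finset.range k, (1/((j:ℝ)+1))^2) * (1/η^2)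
            ≤ 2 * (1/η^2) := by
              exact mul_le_mul_of_nonneg_right h1 (by positivity)
          _ = 2/η^2 := by ring
    
lemma big_chain_sum (hη : 0 < η)
    (hE1 : ∀ Q ∈ 𝒮, E Q ⊆ Q ∧ MeasurableSet (E Q) ∧
      ENNReal.ofReal η * volume Q ≤ volume (E Q))
    (hE2 : 𝒮.Pairwise fun Q Q' => Disjoint (E Q) (E Q'))
    (hgrid : ∀ Q ∈ 𝒮, ∀ Q' ∈ 𝒮, Q ⊆ Q' ∨ Q' ⊆ Q ∨ Q ∩ Q' = ∅)
    (x : Fin n → ℝ) {v₀ : ℝ≥0∞} (h0 : v₀ ≠ 0) (htop : v₀ ≠ ⊤)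
    (F : Finset (Set (Fin n → ℝ))) (hF : ∀ Q ∈ F, Q ∈ 𝒮 ∧ x ∈ Q ∧ v₀ ≤ volume Q) :
    (∑ Q ∈ F, (v₀ / volume Q)^2) ≤ ENNReal.ofReal (2/η^2) := by
  have main : ∀ (k : ℕ) (F : Finset (Set (Fin n → ℝ))), F.card = k →
      (∀ Q ∈ F, Q ∈ 𝒮 ∧ x ∈ Q ∧ v₀ ≤ volume Q) →
      (∑ Q ∈ F, (v₀ / volume Q)^2)
        ≤ ∑ j ∈ Finset.range k, ((((j:ℕ)+1 : ℝ≥0∞) * ENNReal.ofReal η)⁻¹)^2 := by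
    intro k
    induction k with
    | zero => intro F hc _; rw [Finset.card_eq_zero.1 hc]; simp
    | succ k ih =>
        intro F hcard hF
        have hne : F.Nonempty := Finset.card_pos.1 (by omega)
        have hFc : ∀ a ∈ F, ∀ b ∈ F, a ⊆ b ∨ b ⊆ a := by
          intro P hP P' hP'
          rcases hgrid P (hF P hP).1 P' (hF P' hP').1 with h | h | h
          · exact Or.inl h
          · exact Or.inr h
          · exfalso
            have : x ∈ P ∩ P' := ⟨(hF P hP).2.1, (hF P' hP').2.1⟩
            rw [h] at this; exact this
        obtain ⟨M, hMF, hMmax⟩ := chain_max F hFc hne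
        -- volume of M is at least card * η * v₀
        have hvolM : ((k:ℝ≥0∞)+1) * (ENNReal.ofReal η * v₀) ≤ volume M := by
          have hdisj : (↑F : Set (Set (Fin n → ℝ))).PairwiseDisjoint E := by
            intro P hP P' hP' hne'
            exact hE2 (hF P hP).1 (hF P' hP').1 hne'
          have hmeas : ∀ Q ∈ F, MeasurableSet (E Q) := fun Q hQ => (hE1 Q (hF Q hQ).1).2.1
          calc ((k:ℝ≥0∞)+1) * (ENNReal.ofReal η * v₀)
              = ∑ Q ∈ F, (ENNReal.ofReal η * v₀) := by
                rw [Finset.sum_const, nsmul_eq_mul, hcard]; push_cast; ring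
            _ ≤ ∑ Q ∈ F, volume (E Q) := by
                refine Finset.sum_le_sum fun Q hQ => ?_
                calc ENNReal.ofReal η * v₀ ≤ ENNReal.ofReal η * volume Q :=
                      mul_le_mul_right (hF Q hQ).2.2 _
                  _ ≤ volume (E Q) := (hE1 Q (hF Q hQ).1).2.2
            _ = volume (⋃ Q ∈ F, E Q) := (measure_biUnion_finset hdisj hmeas).symm
            _ ≤ volume M := by
                refine measure_mono (Set.iUnion₂_subset fun Q hQ => ?_)
                exact ((hE1 Q (hF Q hQ).1).1).trans (hMmax Q hQ)
        have htermM : (v₀ / volume M)^2 ≤ ((((k:ℕ)+1 : ℝ≥0∞) * ENNReal.ofReal η)⁻¹)^2 := by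
          refine pow_le_pow_left' ?_ 2
          calc v₀ / volume M ≤ v₀ / (((k:ℝ≥0∞)+1) * (ENNReal.ofReal η * v₀)) :=
                ENNReal.div_le_div_left hvolM v₀
            _ = ((((k:ℕ)+1 : ℝ≥0∞)) * ENNReal.ofReal η)⁻¹ := by
                rw [← mul_assoc]
                set c : ℝ≥0∞ := ((k:ℝ≥0∞)+1) * ENNReal.ofReal η with hc
                rw [div_eq_mul_inv, ENNReal.mul_inv (Or.inr htop) (Or.inr h0),
                  ← mul_assoc, mul_comm v₀ c⁻¹, mul_assoc, ENNReal.mul_inv_cancel h0 htop,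
                  mul_one]
        have hcarderase : (F.erase M).card = k := by
          rw [Finset.card_erase_of_mem hMF, hcard]
          omega
        calc (∑ Q ∈ F, (v₀ / volume Q)^2)
            = (∑ Q ∈ F.erase M, (v₀ / volume Q)^2) + (v₀ / volume M)^2 :=
              (Finset.sum_erase_add F _ hMF).symm
          _ ≤ (∑ j ∈ Finset.range k, ((((j:ℕ)+1 : ℝ≥0∞) * ENNReal.ofReal η)⁻¹)^2)
              + ((((k:ℕ)+1 : ℝ≥0∞) * ENNReal.ofReal η)⁻¹)^2 := by
              exact add_le_add
                (ih (F.erase M) hcarderase (fun Q hQ => hF Q (Finset.mem_of_mem_erase hQ)))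
                htermM
          _ = ∑ j ∈ Finset.range (k+1), ((((j:ℕ)+1 : ℝ≥0∞) * ENNReal.ofReal η)⁻¹)^2 := by
              rw [Finset.sum_range_succ]
  exact le_trans (main F.card F rfl hF) (Ck_le hη F.card)


lemma small_subset_T {b : Fin n → ℝ} {h₀ : ℝ} (hh₀ : 0 < h₀)
    {Q : Set (Fin n → ℝ)} (hQ : IsCube Q)
    (hint : (Q ∩ (Set.univ.pi fun i => Set.Ico (b i) (b i + h₀))).Nonempty)
    (hvol : volume Q ≤ volume (Set.univ.pi fun i => Set.Ico (b i) (b i + h₀))) :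
    Q ⊆ Set.univ.pi fun i => Set.Ico (b i - h₀) (b i + 2*h₀) := by
  obtain ⟨a, h, hh, rfl⟩ := hQ
  rcases Nat.eq_zero_or_pos n with hn | hn
  · subst hn
    intro y _ i _
    exact i.elim0
  · have hhh₀ : h ≤ h₀ := by
      by_contra hcon
      push_neg at hcon
      rw [cube_volume, cube_volume] at hvol
      have : ENNReal.ofReal h₀ ^ n < ENNReal.ofReal h ^ n :=
        ENNReal.pow_lt_pow_left hn.ne' ((ENNReal.ofReal_lt_ofReal_iff hh).2 hcon)
      exact absurd hvol this.not_ge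
    obtain ⟨z, hz1, hz2⟩ := hint
    intro y hy i _
    have hzi1 := hz1 i (Set.mem_univ i)
    have hzi2 := hz2 i (Set.mem_univ i)
    have hyi := hy i (Set.mem_univ i)
    simp only [Set.mem_Ico] at hzi1 hzi2 hyi ⊢
    constructor
    · nlinarith [hzi1.1, hzi1.2, hzi2.1, hzi2.2, hyi.1, hyi.2]
    · nlinarith [hzi1.1, hzi1.2, hzi2.1, hzi2.2, hyi.1, hyi.2]

lemma vol_T {b : Fin n → ℝ} {h₀ : ℝ} (hh₀ : 0 < h₀) :
    volume (Set.univ.pi fun i => Set.Ico (b i - h₀) (b i + 2*h₀))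
      = 3^n * volume (Set.univ.pi fun i => Set.Ico (b i) (b i + h₀)) := by
  have h1 : ∀ i : Fin n, Set.Ico (b i - h₀) (b i + 2*h₀)
      = Set.Ico (b i - h₀) ((b i - h₀) + 3*h₀) := by
    intro i; congr 1; ring
  calc volume (Set.univ.pi fun i => Set.Ico (b i - h₀) (b i + 2*h₀))
      = volume (Set.univ.pi fun i => Set.Ico (b i - h₀) ((b i - h₀) + 3*h₀)) := by
        congr 1; exact Set.pi_congr rfl fun i _ => h1 i
    _ = ENNReal.ofReal (3*h₀) ^ n := cube_volume
    _ = (3 * ENNReal.ofReal h₀) ^ n := by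
        rw [ENNReal.ofReal_mul (by norm_num)]
        norm_num
    _ = 3^n * ENNReal.ofReal h₀ ^ n := mul_pow _ _ n
    _ = 3^n * volume (Set.univ.pi fun i => Set.Ico (b i) (b i + h₀)) := by rw [cube_volume]


/-- small cubes of `𝒮` relative to `Q₀` -/
def SP (𝒮 : Set (Set (Fin n → ℝ))) (Q₀ : Set (Fin n → ℝ)) : Set (Set (Fin n → ℝ)) :=
  {Q | Q ∈ 𝒮 ∧ (Q ∩ Q₀).Nonempty ∧ volume Q ≤ volume Q₀}


lemma pointwise_bad (hm : 0 < m) (hη : 0 < η)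
    (h𝒮cube : ∀ Q ∈ 𝒮, IsCube Q)
    (hgrid : ∀ Q ∈ 𝒮, ∀ Q' ∈ 𝒮, Q ⊆ Q' ∨ Q' ⊆ Q ∨ Q ∩ Q' = ∅)
    (hE1 : ∀ Q ∈ 𝒮, E Q ⊆ Q ∧ MeasurableSet (E Q) ∧
      ENNReal.ofReal η * volume Q ≤ volume (E Q))
    (hE2 : 𝒮.Pairwise fun Q Q' => Disjoint (E Q) (E Q'))
    {Q₀ : Set (Fin n → ℝ)} (hQ₀ : IsCube Q₀)
    (hbdd : ∀ i, ∃ M : ℝ, ∀ x, |f i x| ≤ M)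
    (hsupp : ∀ i y, y ∉ Q₀ → f i y = 0)
    (hx : x ∈ Q₀) {t r : ℝ} (hr : r = t^2 - 2/η^2) (hr0 : 0 ≤ r) (ht : 0 ≤ t)
    (hlt : ENNReal.ofReal t * multiMax f x < sparseSq 𝒮 f x) :
    ∃ Qm, Qm ∈ Dset (SP 𝒮 Q₀) (⌊r⌋₊ + 1) ∧ x ∈ Qm := by
  set w : Fin m → (Fin n → ℝ) → ℝ≥0∞ := fun i y => ENNReal.ofReal |f i y| with hw
  set ℳx := multiMax f x with hℳ
  set v₀ := volume Q₀ with hv₀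
  have hv₀0 : v₀ ≠ 0 := (IsCube.vol_pos hQ₀).ne'
  have hv₀top : v₀ ≠ ⊤ := (IsCube.vol_lt_top hQ₀).ne
  set S : ℝ≥0∞ := ∑' Q : 𝒮, (Q : Set (Fin n → ℝ)).indicator
      (fun _ => ∏ i, lavg (w i) Q.1 ^ 2) x with hS
  -- ℳx ≠ 0
  have hℳ0 : ℳx ≠ 0 := by
    intro h0
    have hS0 : S = 0 := by
      rw [hS]
      refine (Summable.tsum_eq_zero_iff ENNReal.summable).2 fun Q => ?_
      by_cases hxQ : x ∈ (Q : Set (Fin n → ℝ))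
      · rw [Set.indicator_of_mem hxQ]
        have h1 : (∏ i, lavg (w i) (Q:Set (Fin n → ℝ)) ^ 2)
            = (∏ i, lavg (w i) (Q:Set (Fin n → ℝ))) ^ 2 := Finset.prod_pow _ _ _
        have h2 := prod_lavg_le_multiMax (f := f) (h𝒮cube _ Q.2) hxQ
        rw [← hℳ, h0, le_zero_iff] at h2
        rw [h1, h2]
        simp
      · exact Set.indicator_of_notMem hxQ _
    rw [sparseSq] at hlt
    rw [← hS, hS0] at hlt
    rw [ENNReal.zero_rpow_of_pos (by norm_num)] at hlt
    exact absurd hlt (by simp)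
  obtain ⟨M, hM⟩ : ∃ M : Fin m → ℝ, ∀ i x, |f i x| ≤ M i := by
    choose M hM using hbdd
    exact ⟨M, hM⟩
  have hℳtop : ℳx ≠ ⊤ := multiMax_ne_top M hM
  -- squaring
  have hsq : ENNReal.ofReal (t^2) * ℳx^2 < S := by
    have h1 : (ENNReal.ofReal t * ℳx)^2 < (sparseSq 𝒮 f x)^2 :=
      ENNReal.pow_lt_pow_left (by norm_num) hlt
    have h2 : (sparseSq 𝒮 f x)^2 = S := by
      rw [sparseSq, ← hS, ← ENNReal.rpow_natCast (S ^ ((1:ℝ)/2)) 2, ← ENNReal.rpow_mul]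
      norm_num
    have h3 : (ENNReal.ofReal t * ℳx)^2 = ENNReal.ofReal (t^2) * ℳx^2 := by
      rw [mul_pow, ← ENNReal.ofReal_pow ht]
    rw [← h3, ← h2]
    exact h1
  -- split
  set term : ↥𝒮 → ℝ≥0∞ := fun Q => ∏ i, lavg (w i) (Q : Set (Fin n → ℝ)) ^ 2 with hterm
  set gs : ↥𝒮 → ℝ≥0∞ := fun Q =>
    if x ∈ (Q : Set (Fin n → ℝ)) ∧ volume (Q : Set (Fin n → ℝ)) ≤ v₀ then term Q else 0 with hgs
  set gb : ↥𝒮 → ℝ≥0∞ := fun Q =>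
    if x ∈ (Q : Set (Fin n → ℝ)) ∧ v₀ < volume (Q : Set (Fin n → ℝ)) then term Q else 0 with hgb
  have htermapp : ∀ Q : ↥𝒮, term Q = ∏ i, lavg (w i) (Q : Set (Fin n → ℝ)) ^ 2 :=
    fun _ => rfl
  have hgsa : ∀ Q : ↥𝒮, gs Q =
      if x ∈ (Q : Set (Fin n → ℝ)) ∧ volume (Q : Set (Fin n → ℝ)) ≤ v₀ then term Q else 0 :=
    fun _ => rfl
  have hgba : ∀ Q : ↥𝒮, gb Q =
      if x ∈ (Q : Set (Fin n → ℝ)) ∧ v₀ < volume (Q : Set (Fin n → ℝ)) then term Q else 0 :=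
    fun _ => rfl
  have hsplit : S = (∑' Q : ↥𝒮, gs Q) + (∑' Q : ↥𝒮, gb Q) := by
    rw [hS, ← ENNReal.tsum_add]
    refine tsum_congr fun Q => ?_
    rw [hgsa, hgba]
    by_cases hxQ : x ∈ (Q : Set (Fin n → ℝ))
    · rw [Set.indicator_of_mem hxQ]
      by_cases hvol : volume (Q : Set (Fin n → ℝ)) ≤ v₀
      · rw [if_pos ⟨hxQ, hvol⟩, if_neg (fun hcc => absurd hcc.2 (not_lt.2 hvol)), add_zero,
          htermapp]
      · rw [if_neg (fun hcc => absurd hcc.2 hvol), if_pos ⟨hxQ, not_le.1 hvol⟩, zero_add,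
          htermapp]
    · rw [Set.indicator_of_notMem hxQ, if_neg (fun hcc => absurd hcc.1 hxQ),
        if_neg (fun hcc => absurd hcc.1 hxQ), add_zero]
  -- small part
  set N' : ℝ≥0∞ := ∑' Q : ↥𝒮,
    (if x ∈ (Q : Set (Fin n → ℝ)) ∧ volume (Q : Set (Fin n → ℝ)) ≤ v₀ then (1:ℝ≥0∞) else 0)
    with hN'
  have hsmall : (∑' Q : ↥𝒮, gs Q) ≤ N' * ℳx^2 := by
    rw [hN', ← ENNReal.tsum_mul_right]
    refine Summable.tsum_le_tsum (fun Q => ?_) ENNReal.summable ENNReal.summable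
    rw [hgsa]
    split
    · next hc =>
        rw [one_mul, htermapp, Finset.prod_pow]
        exact pow_le_pow_left' (prod_lavg_le_multiMax (f := f) (h𝒮cube _ Q.2) hc.1) 2
    · simp
  -- big part
  have hbig : (∑' Q : ↥𝒮, gb Q) ≤ ENNReal.ofReal (2/η^2) * ℳx^2 := by
    have hb1 : ∀ Q : ↥𝒮, gb Q ≤
        (if x ∈ (Q : Set (Fin n → ℝ)) ∧ v₀ < volume (Q : Set (Fin n → ℝ))
          then (v₀ / volume (Q : Set (Fin n → ℝ)))^2 else 0) * ℳx^2 := by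
      intro Q
      rw [hgba]
      split
      · next hc =>
          rw [htermapp, Finset.prod_pow]
          have := prod_lavg_big_le (f := f) hm hQ₀ (IsCube.measurableSet hQ₀) hv₀0 hv₀top hx hsupp
            hc.2.le (Q := (Q : Set (Fin n → ℝ)))
          calc (∏ i, lavg (w i) (Q : Set (Fin n → ℝ))) ^ 2
              ≤ ((v₀ / volume (Q : Set (Fin n → ℝ))) * ℳx)^2 := pow_le_pow_left' this 2
            _ = (v₀ / volume (Q : Set (Fin n → ℝ)))^2 * ℳx^2 := mul_pow _ _ 2
      · simp
    have hb2 : (∑' Q : ↥𝒮, (if x ∈ (Q : Set (Fin n → ℝ)) ∧ v₀ < volume (Q : Set (Fin n → ℝ))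
        then (v₀ / volume (Q : Set (Fin n → ℝ)))^2 else 0)) ≤ ENNReal.ofReal (2/η^2) := by
      rw [ENNReal.tsum_eq_iSup_sum]
      refine iSup_le fun F => ?_
      rw [← Finset.sum_filter]
      set F' := (F.filter (fun Q : ↥𝒮 => x ∈ (Q : Set (Fin n → ℝ)) ∧
        v₀ < volume (Q : Set (Fin n → ℝ)))).image Subtype.val with hF'
      have : (∑ Q ∈ F.filter (fun Q : ↥𝒮 => x ∈ (Q : Set (Fin n → ℝ)) ∧
          v₀ < volume (Q : Set (Fin n → ℝ))), (v₀ / volume (Q : Set (Fin n → ℝ)))^2)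
          = ∑ P ∈ F', (v₀ / volume P)^2 := by
        rw [hF', Finset.sum_image (fun a _ b _ hab => Subtype.val_injective hab)]
      rw [this]
      refine big_chain_sum hη hE1 hE2 hgrid x hv₀0 hv₀top F' fun P hP => ?_
      rw [hF'] at hP
      obtain ⟨Q, hQ, rfl⟩ := Finset.mem_image.1 hP
      have hQ2 := Finset.mem_filter.1 hQ
      exact ⟨Q.2, hQ2.2.1, hQ2.2.2.le⟩
    calc (∑' Q : ↥𝒮, gb Q)
        ≤ ∑' Q : ↥𝒮, (if x ∈ (Q : Set (Fin n → ℝ)) ∧ v₀ < volume (Q : Set (Fin n → ℝ))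
            then (v₀ / volume (Q : Set (Fin n → ℝ)))^2 else 0) * ℳx^2 :=
          Summable.tsum_le_tsum hb1 ENNReal.summable ENNReal.summable
      _ = (∑' Q : ↥𝒮, (if x ∈ (Q : Set (Fin n → ℝ)) ∧ v₀ < volume (Q : Set (Fin n → ℝ))
            then (v₀ / volume (Q : Set (Fin n → ℝ)))^2 else 0)) * ℳx^2 :=
          ENNReal.tsum_mul_right
      _ ≤ ENNReal.ofReal (2/η^2) * ℳx^2 := mul_le_mul_left hb2 _
  -- combine and cancel
  have hcomb : ENNReal.ofReal (t^2) * ℳx^2 < (N' + ENNReal.ofReal (2/η^2)) * ℳx^2 := by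
    calc ENNReal.ofReal (t^2) * ℳx^2 < S := hsq
      _ ≤ N' * ℳx^2 + ENNReal.ofReal (2/η^2) * ℳx^2 := by
          rw [hsplit]; exact add_le_add hsmall hbig
      _ = (N' + ENNReal.ofReal (2/η^2)) * ℳx^2 := (add_mul _ _ _).symm
  have hcancel : ENNReal.ofReal (t^2) < N' + ENNReal.ofReal (2/η^2) := by
    have h2 : ℳx^2 ≠ 0 := pow_ne_zero 2 hℳ0
    have h3 : ℳx^2 ≠ ⊤ := ENNReal.pow_ne_top hℳtop
    exact lt_of_mul_lt_mul_right' hcomb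
  have hrN : ENNReal.ofReal r < N' := by
    have h1 : ENNReal.ofReal (t^2) = ENNReal.ofReal r + ENNReal.ofReal (2/η^2) := by
      rw [← ENNReal.ofReal_add hr0 (by positivity)]
      congr 1
      rw [hr]; ring
    rw [h1] at hcancel
    exact (ENNReal.add_lt_add_iff_right ENNReal.ofReal_ne_top).1 hcancel
  -- extract finset
  have hfloor : ((⌊r⌋₊ : ℕ) : ℝ≥0∞) < N' := by
    refine lt_of_le_of_lt ?_ hrN
    rw [← ENNReal.ofReal_natCast]
    exact ENNReal.ofReal_le_ofReal (Nat.floor_le hr0)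
  obtain ⟨F₀, hF₀⟩ : ∃ F₀ : Finset ↥𝒮, ((⌊r⌋₊ : ℕ) : ℝ≥0∞) < ∑ Q ∈ F₀,
      (if x ∈ (Q : Set (Fin n → ℝ)) ∧ volume (Q : Set (Fin n → ℝ)) ≤ v₀ then (1:ℝ≥0∞) else 0)
      := by
    rw [hN', ENNReal.tsum_eq_iSup_sum] at hfloor
    exact lt_iSup_iff.1 hfloor
  set c : ↥𝒮 → Prop := fun Q => x ∈ (Q : Set (Fin n → ℝ)) ∧ volume (Q : Set (Fin n → ℝ)) ≤ v₀
    with hc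
  have hcard : ⌊r⌋₊ + 1 ≤ (F₀.filter c).card := by
    have h1 : (∑ Q ∈ F₀, (if c Q then (1:ℝ≥0∞) else 0)) = ((F₀.filter c).card : ℝ≥0∞) := by
      rw [← Finset.sum_filter, Finset.sum_const, nsmul_eq_mul, mul_one]
    rw [h1] at hF₀
    exact_mod_cast hF₀
  set F : Finset (Set (Fin n → ℝ)) := (F₀.filter c).image Subtype.val with hF
  have hFcard : ⌊r⌋₊ + 1 ≤ F.card := by
    rw [hF, Finset.card_image_of_injective _ Subtype.val_injective]
    exact hcard
  have hFprop : ∀ P ∈ F, P ∈ SP 𝒮 Q₀ ∧ x ∈ P := by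
    intro P hP
    rw [hF] at hP
    obtain ⟨Q, hQ, rfl⟩ := Finset.mem_image.1 hP
    have hQ2 := Finset.mem_filter.1 hQ
    exact ⟨⟨Q.2, ⟨x, hQ2.2.1, hx⟩, hQ2.2.2⟩, hQ2.2.1⟩
  have hFc : ∀ a ∈ F, ∀ b ∈ F, a ⊆ b ∨ b ⊆ a := by
    intro P hP P' hP'
    rcases hgrid P (hFprop P hP).1.1 P' (hFprop P' hP').1.1 with h | h | h
    · exact Or.inl h
    · exact Or.inr h
    · exfalso
      have : x ∈ P ∩ P' := ⟨(hFprop P hP).2, (hFprop P' hP').2⟩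
      rw [h] at this; exact this
  have hFne : F.Nonempty := Finset.card_pos.1 (by omega)
  obtain ⟨Qm, hQmF, hQmin⟩ := chain_min F hFc hFne
  refine ⟨Qm, ⟨F, ?_, hFcard, hQmF, hQmin⟩, (hFprop Qm hQmF).2⟩
  intro P hP
  exact (hFprop P hP).1


lemma numeric_caseA (n : ℕ) {η t : ℝ} (hη : 0 < η) (hη1 : η ≤ 1)
    (hcase : t^2 ≤ 2/η^2 + 1) :
    1 ≤ (3:ℝ)^n * η⁻¹ * (2:ℝ)^((4/η^2)+4)
      * Real.exp (-(Real.log 2 / (⌈2/η⌉₊:ℝ)) * t^2) := by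
  set L := Real.log 2 with hL
  have hLpos : 0 < L := Real.log_pos (by norm_num)
  set B := ((⌈2/η⌉₊:ℕ):ℝ) with hB
  have hB1 : (1:ℝ) ≤ B := by
    rw [hB]
    exact_mod_cast Nat.ceil_pos.2 (by positivity : (0:ℝ) < 2/η)
  have h3 : (1:ℝ) ≤ (2:ℝ)^((4/η^2)+4) * Real.exp (-(L/B) * t^2) := by
    rw [Real.rpow_def_of_pos (by norm_num : (0:ℝ) < 2), ← hL, ← Real.exp_add]
    rw [← Real.exp_zero]
    refine Real.exp_le_exp.2 ?_
    have h4 : L/B * t^2 ≤ L * t^2 := by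
      refine mul_le_mul_of_nonneg_right (div_le_self hLpos.le hB1) (by positivity)
    have h5 : L * t^2 ≤ L * (4/η^2 + 4) := by
      refine mul_le_mul_of_nonneg_left ?_ hLpos.le
      have h6 : (0:ℝ) ≤ 2/η^2 := by positivity
      have h7 : 2/η^2 + 2/η^2 = 4/η^2 := by ring
      linarith
    nlinarith
  have h12 : (1:ℝ) ≤ (3:ℝ)^n * η⁻¹ := by
    have h1 : (1:ℝ) ≤ (3:ℝ)^n := one_le_pow₀ (by norm_num : (1:ℝ) ≤ 3)
    have h2 : (1:ℝ) ≤ η⁻¹ := (one_le_inv_iff₀.2 ⟨hη, hη1⟩)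
    nlinarith
  calc (1:ℝ) = 1 * 1 := by ring
    _ ≤ ((3:ℝ)^n * η⁻¹) * ((2:ℝ)^((4/η^2)+4) * Real.exp (-(L/B) * t^2)) :=
        mul_le_mul h12 h3 zero_le_one (by positivity)
    _ = (3:ℝ)^n * η⁻¹ * (2:ℝ)^((4/η^2)+4) * Real.exp (-(L/B) * t^2) := by ring

lemma numeric_caseB (n : ℕ) {η t r : ℝ} (hη : 0 < η) (hη1 : η ≤ 1)
    (hr : r = t^2 - 2/η^2) (hr0 : 0 ≤ r) :
    η⁻¹ * ((2⁻¹:ℝ)^(⌊r⌋₊ / ⌈2/η⌉₊) * (3:ℝ)^n)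
      ≤ (3:ℝ)^n * η⁻¹ * (2:ℝ)^((4/η^2)+4)
        * Real.exp (-(Real.log 2 / (⌈2/η⌉₊:ℝ)) * t^2) := by
  set L := Real.log 2 with hL
  have hLpos : 0 < L := Real.log_pos (by norm_num)
  set b₀ : ℕ := ⌈2/η⌉₊ with hb₀
  have hb₀pos : 0 < b₀ := Nat.ceil_pos.2 (by positivity)
  set B := ((b₀:ℕ):ℝ) with hB
  have hB1 : (1:ℝ) ≤ B := by rw [hB]; exact_mod_cast hb₀pos
  set j : ℕ := ⌊r⌋₊ / b₀ with hj
  have hkey : (2⁻¹:ℝ)^j ≤ (2:ℝ)^((4/η^2)+4) * Real.exp (-(L/B) * t^2) := by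
    have e1 : (2:ℝ)^j = Real.exp ((j:ℝ) * L) := by
      rw [hL, ← Real.log_pow, Real.exp_log (by positivity)]
    have h2j : (2⁻¹:ℝ)^j = Real.exp (-((j:ℝ) * L)) := by
      rw [inv_pow, e1, ← Real.exp_neg]
    rw [h2j, Real.rpow_def_of_pos (by norm_num : (0:ℝ) < 2), ← hL, ← Real.exp_add]
    refine Real.exp_le_exp.2 ?_
    -- need : -(L*j) ≤ L*(4/η²+4) - (L/B)*t²  ⇔ (L/B) t² ≤ L(j + 4/η²+4) ⇔ t² ≤ B(j+4/η²+4)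
    have hmod : (⌊r⌋₊ : ℝ) ≤ B * j + (B - 1) := by
      have h1 : b₀ * j + ⌊r⌋₊ % b₀ = ⌊r⌋₊ := Nat.div_add_mod _ _
      have h2 : ⌊r⌋₊ % b₀ ≤ b₀ - 1 := Nat.le_sub_one_of_lt (Nat.mod_lt _ hb₀pos)
      have h3 : (⌊r⌋₊:ℝ) = B * j + (⌊r⌋₊ % b₀ : ℕ) := by
        rw [hB]; exact_mod_cast h1.symm
      have h4 : ((⌊r⌋₊ % b₀ : ℕ):ℝ) ≤ B - 1 := by
        rw [hB]
        have : ((⌊r⌋₊ % b₀ : ℕ):ℝ) ≤ ((b₀ - 1 : ℕ):ℝ) := by exact_mod_cast h2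
        refine this.trans ?_
        push_cast [Nat.cast_sub hb₀pos]
        linarith
      linarith
    have ht2 : t^2 ≤ B * j + B + 2/η^2 := by
      have h5 : r < ⌊r⌋₊ + 1 := Nat.lt_floor_add_one r
      have h6 : t^2 = r + 2/η^2 := by rw [hr]; ring
      linarith
    have ht3 : t^2 ≤ B * (j + (4/η^2+4)) := by
      have h7 : (0:ℝ) < 1/η^2 := by positivity
      have h8 : 2/η^2 = 2 * (1/η^2) := by ring
      have h9 : B * (4/η^2) = 4 * B * (1/η^2) := by ring
      nlinarith [mul_le_mul_of_nonneg_right hB1 h7.le]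
    have h10 : L/B * t^2 ≤ L * (j + (4/η^2+4)) := by
      rw [div_mul_eq_mul_div, div_le_iff₀ (by linarith)]
      calc L * t^2 ≤ L * (B * (j + (4/η^2+4))) := mul_le_mul_of_nonneg_left ht3 hLpos.le
        _ = L * (j + (4/η^2+4)) * B := by ring
    nlinarith
  have hpos : (0:ℝ) ≤ η⁻¹ * (3:ℝ)^n := by positivity
  calc η⁻¹ * ((2⁻¹:ℝ)^j * (3:ℝ)^n) = (η⁻¹ * (3:ℝ)^n) * (2⁻¹:ℝ)^j := by ring
    _ ≤ (η⁻¹ * (3:ℝ)^n) * ((2:ℝ)^((4/η^2)+4) * Real.exp (-(L/B) * t^2)) :=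
        mul_le_mul_of_nonneg_left hkey hpos
    _ = (3:ℝ)^n * η⁻¹ * (2:ℝ)^((4/η^2)+4) * Real.exp (-(L/B) * t^2) := by ring


end
end SparseAux

open SparseAux

/-- Local exponential decay for sparse operators:
`|{x ∈ Q₀ : 𝒜²_𝒮(f⃗)(x) > t ℳ(f⃗)(x)}| ≤ c₁ e^{−c₂ t²} |Q₀|` for bounded `fᵢ`
supported in `Q₀`. -/
theorem sparse_square_local_decay (n m : ℕ) (hm : 0 < m)
    (η : ℝ) (hη : 0 < η) (hη1 : η ≤ 1) :
    ∃ c₁ c₂ : ℝ, 0 < c₁ ∧ 0 < c₂ ∧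
      ∀ (𝒮 : Set (Set (Fin n → ℝ))), IsSparseDyadic η 𝒮 →
      ∀ (Q₀ : Set (Fin n → ℝ)), IsCube Q₀ →
      ∀ f : Fin m → (Fin n → ℝ) → ℝ, (∀ i, Measurable (f i)) →
        (∀ i, ∃ M : ℝ, ∀ x, |f i x| ≤ M) →
        (∀ i x, x ∉ Q₀ → f i x = 0) →
        ∀ t : ℝ, 0 < t →
          volume {x ∈ Q₀ | ENNReal.ofReal t * multiMax f x < sparseSq 𝒮 f x}
            ≤ ENNReal.ofReal (c₁ * Real.exp (-c₂ * t ^ 2)) * volume Q₀ := by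
  classical
  set b₀ : ℕ := ⌈2/η⌉₊ with hb₀def
  have hb₀pos : 0 < b₀ := Nat.ceil_pos.2 (by positivity)
  have hb₀R : (1:ℝ) ≤ (b₀:ℝ) := by exact_mod_cast hb₀pos
  have hlog2 : (0:ℝ) < Real.log 2 := Real.log_pos (by norm_num)
  refine ⟨(3:ℝ)^n * η⁻¹ * (2:ℝ) ^ ((4/η^2) + 4), Real.log 2 / b₀, by positivity,
    by positivity, ?_⟩
  set c₁ : ℝ := (3:ℝ)^n * η⁻¹ * (2:ℝ) ^ ((4/η^2) + 4) with hc₁def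
  set c₂ : ℝ := Real.log 2 / b₀ with hc₂def
  intro 𝒮 hSD Q₀ hQ₀ f hfm hbdd hsupp t ht
  obtain ⟨⟨E, hE1, hE2⟩, 𝒟, ⟨h𝒟cube, h𝒟grid, h𝒟cnt⟩, h𝒮𝒟⟩ := hSD
  have hcnt : 𝒮.Countable := h𝒟cnt.mono h𝒮𝒟
  have h𝒮cube : ∀ Q ∈ 𝒮, IsCube Q := fun Q hQ => h𝒟cube Q (h𝒮𝒟 hQ)
  have hgrid : ∀ Q ∈ 𝒮, ∀ Q' ∈ 𝒮, Q ⊆ Q' ∨ Q' ⊆ Q ∨ Q ∩ Q' = ∅ :=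
    fun Q hQ Q' hQ' => h𝒟grid Q (h𝒮𝒟 hQ) Q' (h𝒮𝒟 hQ')
  have hSP𝒮 : SP 𝒮 Q₀ ⊆ 𝒮 := fun Q hQ => hQ.1
  have hSPgrid : ∀ Q ∈ SP 𝒮 Q₀, ∀ Q' ∈ SP 𝒮 Q₀, Q ⊆ Q' ∨ Q' ⊆ Q ∨ Q ∩ Q' = ∅ :=
    fun Q hQ Q' hQ' => hgrid Q hQ.1 Q' hQ'.1
  have hSPne : ∀ Q ∈ SP 𝒮 Q₀, Q.Nonempty := fun Q hQ => cube_nonempty (h𝒮cube Q hQ.1)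
  have hoη0 : ENNReal.ofReal η ≠ 0 := (ENNReal.ofReal_pos.2 hη).ne'
  have hv₀top : volume Q₀ ≠ ⊤ := (IsCube.vol_lt_top hQ₀).ne
  -- numeric helper : the target constant is ≥ the explicit bound
  by_cases hcase : t^2 ≤ 2/η^2 + 1
  · -- trivial case
    have h1 : (1:ℝ≥0∞) ≤ ENNReal.ofReal (c₁ * Real.exp (-c₂ * t ^ 2)) := by
      rw [ENNReal.one_le_ofReal, hc₁def, hc₂def, hb₀def]
      have := numeric_caseA n hη hη1 hcase
      calc (1:ℝ) ≤ (3:ℝ)^n * η⁻¹ * (2:ℝ)^((4/η^2)+4)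
            * Real.exp (-(Real.log 2 / (⌈2/η⌉₊:ℝ)) * t^2) := this
        _ = (3:ℝ)^n * η⁻¹ * (2:ℝ)^((4/η^2)+4)
            * Real.exp (-(Real.log 2 / (⌈2/η⌉₊:ℝ)) * t^2) := rfl
    calc volume {x ∈ Q₀ | ENNReal.ofReal t * multiMax f x < sparseSq 𝒮 f x}
        ≤ volume Q₀ := measure_mono fun x hx => hx.1
      _ = 1 * volume Q₀ := (one_mul _).symm
      _ ≤ ENNReal.ofReal (c₁ * Real.exp (-c₂ * t ^ 2)) * volume Q₀ :=
          mul_le_mul_left h1 _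
  · -- main case
    push_neg at hcase
    have hcnt' := hcnt.to_subtype
    set r : ℝ := t^2 - 2/η^2 with hrdef
    have hr0 : 0 ≤ r := by
      rw [hrdef]; linarith
    set s : ℕ := ⌊r⌋₊ + 1 with hsdef
    set j : ℕ := ⌊r⌋₊ / b₀ with hjdef
    -- inclusion in union of deep cubes
    have hsubU : {x ∈ Q₀ | ENNReal.ofReal t * multiMax f x < sparseSq 𝒮 f x} ⊆
        ⋃ Q : ↥𝒮, (if (Q : Set (Fin n → ℝ)) ∈ Dset (SP 𝒮 Q₀) s
          then (Q : Set (Fin n → ℝ)) else ∅) := by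
      rintro x ⟨hxQ₀, hlt⟩
      obtain ⟨Qm, hQmD, hxQm⟩ := pointwise_bad hm hη h𝒮cube hgrid hE1 hE2 hQ₀ hbdd
        (fun i y hy => hsupp i y hy) hxQ₀ hrdef hr0 ht.le hlt
      have hQm𝒮 : Qm ∈ 𝒮 := (Dset_subset hQmD).1
      refine Set.mem_iUnion.2 ⟨⟨Qm, hQm𝒮⟩, ?_⟩
      rw [if_pos hQmD]
      exact hxQm
    -- measure chain
    have hmeasU : volume {x ∈ Q₀ | ENNReal.ofReal t * multiMax f x < sparseSq 𝒮 f x}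
        ≤ (ENNReal.ofReal η)⁻¹ * Bsum 𝒮 (SP 𝒮 Q₀) E s := by
      calc volume {x ∈ Q₀ | ENNReal.ofReal t * multiMax f x < sparseSq 𝒮 f x}
          ≤ volume (⋃ Q : ↥𝒮, (if (Q : Set (Fin n → ℝ)) ∈ Dset (SP 𝒮 Q₀) s
              then (Q : Set (Fin n → ℝ)) else ∅)) := measure_mono hsubU
        _ ≤ ∑' Q : ↥𝒮, volume (if (Q : Set (Fin n → ℝ)) ∈ Dset (SP 𝒮 Q₀) s
              then (Q : Set (Fin n → ℝ)) else ∅) := measure_iUnion_le _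
        _ = ∑' Q : ↥𝒮, (if (Q : Set (Fin n → ℝ)) ∈ Dset (SP 𝒮 Q₀) s
              then volume (Q : Set (Fin n → ℝ)) else 0) := by
            refine tsum_congr fun Q => ?_
            split <;> simp
        _ ≤ ∑' Q : ↥𝒮, (if (Q : Set (Fin n → ℝ)) ∈ Dset (SP 𝒮 Q₀) s
              then (ENNReal.ofReal η)⁻¹ * volume (E (Q : Set (Fin n → ℝ))) else 0) := by
            refine Summable.tsum_le_tsum (fun Q => ?_) ENNReal.summable ENNReal.summable
            split
            · exact vol_le_inv_mul hη hE1 Q.2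
            · exact le_rfl
        _ = (ENNReal.ofReal η)⁻¹ * Bsum 𝒮 (SP 𝒮 Q₀) E s := by
            rw [Bsum, ← ENNReal.tsum_mul_left]
            refine tsum_congr fun Q => ?_
            split <;> simp
    -- decay
    have h1s : 1 + j * b₀ ≤ s := by
      have h2 : j * b₀ ≤ ⌊r⌋₊ := by
        rw [hjdef]
        exact Nat.div_mul_le_self _ _
      omega
    have hdec : Bsum 𝒮 (SP 𝒮 Q₀) E s ≤ (2:ℝ≥0∞)⁻¹^j * Bsum 𝒮 (SP 𝒮 Q₀) E 1 := by
      refine le_trans (Bsum_anti h1s) ?_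
      have := Bsum_decay hη hcnt hE1 hE2 hSP𝒮 hSPgrid hSPne j
      rw [hb₀def]
      exact this
    -- Bsum 1 ≤ vol T
    obtain ⟨bb, h₀, hh₀, hQ₀eq⟩ := hQ₀
    set T : Set (Fin n → ℝ) := Set.univ.pi fun i => Set.Ico (bb i - h₀) (bb i + 2*h₀)
      with hTdef
    have hB1 : Bsum 𝒮 (SP 𝒮 Q₀) E 1 ≤ volume T := by
      rw [Bsum]
      refine tsum_vol_le hcnt hE1 hE2 T _ fun Q => ?_
      split
      · next hmem =>
          refine Or.inr ⟨rfl, ?_⟩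
          have hQSP : (Q : Set (Fin n → ℝ)) ∈ SP 𝒮 Q₀ := Dset_subset hmem
          obtain ⟨hQ𝒮, hQint, hQvol⟩ := hQSP
          rw [hQ₀eq] at hQint hQvol
          exact ((hE1 _ Q.2).1).trans (small_subset_T hh₀ (h𝒮cube _ Q.2) hQint hQvol)
      · exact Or.inl rfl
    have hvolT : volume T = 3^n * volume Q₀ := by
      rw [hTdef, hQ₀eq]
      exact vol_T hh₀
    -- combine
    have hfinal : volume {x ∈ Q₀ | ENNReal.ofReal t * multiMax f x < sparseSq 𝒮 f x}
        ≤ ((ENNReal.ofReal η)⁻¹ * ((2:ℝ≥0∞)⁻¹^j * (3:ℝ≥0∞)^n)) * volume Q₀ := by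
      calc volume {x ∈ Q₀ | ENNReal.ofReal t * multiMax f x < sparseSq 𝒮 f x}
          ≤ (ENNReal.ofReal η)⁻¹ * Bsum 𝒮 (SP 𝒮 Q₀) E s := hmeasU
        _ ≤ (ENNReal.ofReal η)⁻¹ * ((2:ℝ≥0∞)⁻¹^j * Bsum 𝒮 (SP 𝒮 Q₀) E 1) :=
            mul_le_mul_right hdec _
        _ ≤ (ENNReal.ofReal η)⁻¹ * ((2:ℝ≥0∞)⁻¹^j * (3^n * volume Q₀)) := by
            refine mul_le_mul_right (mul_le_mul_right ?_ _) _
            rw [← hvolT]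
            exact hB1
        _ = ((ENNReal.ofReal η)⁻¹ * ((2:ℝ≥0∞)⁻¹^j * (3:ℝ≥0∞)^n)) * volume Q₀ := by
            ring
    -- numeric comparison
    have hK : ((ENNReal.ofReal η)⁻¹ * ((2:ℝ≥0∞)⁻¹^j * (3:ℝ≥0∞)^n))
        ≤ ENNReal.ofReal (c₁ * Real.exp (-c₂ * t ^ 2)) := by
      have e1 : (ENNReal.ofReal η)⁻¹ = ENNReal.ofReal η⁻¹ :=
        (ENNReal.ofReal_inv_of_pos hη).symm
      have e2 : (2:ℝ≥0∞)⁻¹ ^ j = ENNReal.ofReal ((2⁻¹:ℝ)^j) := by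
        rw [ENNReal.ofReal_pow (by norm_num)]
        congr 1
        rw [ENNReal.ofReal_inv_of_pos (by norm_num)]
        norm_num
      have e3 : (3:ℝ≥0∞)^n = ENNReal.ofReal ((3:ℝ)^n) := by
        rw [ENNReal.ofReal_pow (by norm_num)]
        norm_num
      rw [e1, e2, e3, ← ENNReal.ofReal_mul (by positivity), ← ENNReal.ofReal_mul (by positivity)]
      refine ENNReal.ofReal_le_ofReal ?_
      rw [hc₁def, hc₂def, hb₀def]
      exact numeric_caseB n hη hη1 hrdef hr0
    exact hfinal.trans (mul_le_mul_left hK _)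


end
end

section
/- If Φ is a Young function and w a nonnegative function with M_Φ w(x) < ∞ a.e., then for every 0 < δ < 1 the weight (M_Φ w)^δ belongs to A₁ with [(M_Φ w)^δ]_{A₁} ≤ c(n, δ), and for every λ > 0 the weight (M_Φ w)^{−λ} satisfies the reverse Hölder RH_∞ condition with [(M_Φ w)^{−λ}]_{RH_∞} ≤ c(n, λ). -/
open MeasureTheory Set Filter ENNReal

noncomputable section

structure YoungFunction where
  toFun : ℝ → ℝ
  continuousOn : ContinuousOn toFun (Set.Ici 0)
  convexOn : ConvexOn ℝ (Set.Ici 0) toFun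
  strictMonoOn : StrictMonoOn toFun (Set.Ici 0)
  map_zero : toFun 0 = 0
  tendsto_zero : Tendsto (fun t => toFun t / t) (nhdsWithin 0 (Set.Ioi 0)) (nhds 0)
  tendsto_top : Tendsto (fun t => toFun t / t) atTop atTop

/-- The normalized Luxemburg norm
`‖f‖_{Φ,Q} = inf {λ > 0 : (1/|Q|) ∫_Q Φ(|f|/λ) ≤ 1}` (with value `∞` if no such `λ`). -/
def eLuxNorm {n : ℕ} (Φ : ℝ → ℝ) (Q : Set (Fin n → ℝ)) (f : (Fin n → ℝ) → ℝ) : ℝ≥0∞ :=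
  sInf {lam : ℝ≥0∞ | ∃ l : ℝ, 0 < l ∧ lam = ENNReal.ofReal l ∧
    (∫⁻ x in Q, ENNReal.ofReal (Φ (|f x| / l))) ≤ volume Q}

/-- The Orlicz maximal operator `M_Φ w(x) = sup_{Q ∋ x} ‖w‖_{Φ,Q}`. -/
def MOrlicz {n : ℕ} (Φ : ℝ → ℝ) (w : (Fin n → ℝ) → ℝ) (x : Fin n → ℝ) : ℝ≥0∞ :=
  ⨆ (Q : Set (Fin n → ℝ)) (_ : IsCube Q) (_ : x ∈ Q), eLuxNorm Φ Q w

/-- The `A₁` constant `[w]_{A₁} = sup_Q ⟨w⟩_Q · ess sup_Q w⁻¹`. -/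
def A1Const {n : ℕ} (w : (Fin n → ℝ) → ℝ≥0∞) : ℝ≥0∞ :=
  ⨆ (Q : Set (Fin n → ℝ)) (_ : IsCube Q),
    lavg w Q * essSup (fun x => (w x)⁻¹) (volume.restrict Q)

/-- The `RH_∞` constant `[v]_{RH_∞} = sup_Q (ess sup_Q v)/⟨v⟩_Q`. -/
def RHinftyConst {n : ℕ} (v : (Fin n → ℝ) → ℝ≥0∞) : ℝ≥0∞ :=
  ⨆ (Q : Set (Fin n → ℝ)) (_ : IsCube Q),
    essSup v (volume.restrict Q) / lavg v Q

namespace CRaux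

variable {n : ℕ}

def cube (a : Fin n → ℝ) (h : ℝ) : Set (Fin n → ℝ) :=
  Set.univ.pi fun i => Set.Ico (a i) (a i + h)

lemma mem_cube {a x : Fin n → ℝ} {h : ℝ} : x ∈ cube a h ↔ ∀ i, a i ≤ x i ∧ x i < a i + h := by
  simp [cube, Set.mem_pi]

lemma isCube_cube {a : Fin n → ℝ} {h : ℝ} (hh : 0 < h) : IsCube (cube a h) := ⟨a, h, hh, rfl⟩

lemma measurableSet_cube (a : Fin n → ℝ) (h : ℝ) : MeasurableSet (cube a h) :=
  MeasurableSet.univ_pi fun _ => measurableSet_Ico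

lemma volume_cube (a : Fin n → ℝ) {h : ℝ} (hh : 0 ≤ h) :
    volume (cube a h) = ENNReal.ofReal (h ^ n) := by
  rw [cube, volume_pi_pi]
  simp only [Real.volume_Ico, add_sub_cancel_left]
  rw [Finset.prod_const, ← ENNReal.ofReal_pow hh, Finset.card_univ, Fintype.card_fin]

lemma volume_cube_pos (a : Fin n → ℝ) {h : ℝ} (hh : 0 < h) : 0 < volume (cube a h) := by
  rw [volume_cube a hh.le]
  simpa using pow_pos hh n

lemma volume_cube_ne_top (a : Fin n → ℝ) (h : ℝ) : volume (cube a h) ≠ ∞ := by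
  have hsub : cube a h ⊆ cube a (max h 1) := fun x hx =>
    mem_cube.2 fun i => ⟨(mem_cube.1 hx i).1, lt_of_lt_of_le (mem_cube.1 hx i).2
      (by have := le_max_left h 1; linarith)⟩
  refine ne_top_of_le_ne_top ?_ (measure_mono hsub)
  simp [volume_cube a (le_trans zero_le_one (le_max_right h 1))]

lemma cube_nonempty {a : Fin n → ℝ} {h : ℝ} (hh : 0 < h) : (cube a h).Nonempty :=
  ⟨a, mem_cube.2 fun i => ⟨le_rfl, by linarith⟩⟩

variable (Φ : YoungFunction)

lemma yf_mono : MonotoneOn Φ.toFun (Set.Ici 0) := Φ.strictMonoOn.monotoneOn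

lemma yf_nonneg {s : ℝ} (hs : 0 ≤ s) : 0 ≤ Φ.toFun s := by
  rw [← Φ.map_zero]
  exact yf_mono Φ (le_refl (0:ℝ)) hs hs

lemma yf_scale {s θ : ℝ} (hs : 0 ≤ s) (hθ0 : 0 ≤ θ) (hθ1 : θ ≤ 1) :
    Φ.toFun (θ * s) ≤ θ * Φ.toFun s := by
  have h := Φ.convexOn.2 (Set.mem_Ici.2 hs) (Set.mem_Ici.2 (le_refl (0:ℝ))) hθ0
    (by linarith : (0:ℝ) ≤ 1 - θ) (by ring)
  simpa [Φ.map_zero, smul_eq_mul] using h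

lemma yf_unbounded (C : ℝ) : ∃ s : ℝ, 1 ≤ s ∧ C ≤ Φ.toFun s := by
  have := Φ.tendsto_top
  rw [tendsto_atTop_atTop] at this
  obtain ⟨b, hb⟩ := this (max C 1)
  refine ⟨max b 1, le_max_right _ _, ?_⟩
  have h1 : (0:ℝ) < max b 1 := lt_of_lt_of_le one_pos (le_max_right _ _)
  have h2 := hb (max b 1) (le_max_left _ _)
  calc C ≤ max C 1 := le_max_left _ _
    _ ≤ Φ.toFun (max b 1) / max b 1 := h2
    _ ≤ Φ.toFun (max b 1) := by
        rw [div_le_iff₀ h1]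
        nlinarith [yf_nonneg Φ (le_of_lt h1), le_max_right b 1]

lemma measurable_ofReal_comp {w : (Fin n → ℝ) → ℝ} (hw : Measurable w) {l : ℝ} (hl : 0 < l) :
    Measurable fun x => ENNReal.ofReal (Φ.toFun (|w x| / l)) := by
  have hc : Continuous fun s : ℝ => Φ.toFun (max s 0) :=
    Φ.continuousOn.comp_continuous (continuous_id.max continuous_const)
      (fun s => Set.mem_Ici.2 (le_max_right _ _))
  have : (fun x => ENNReal.ofReal (Φ.toFun (|w x| / l)))
      = fun x => ENNReal.ofReal (Φ.toFun (max (|w x| / l) 0)) := by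
    funext x
    rw [max_eq_left (by positivity)]
  rw [this]
  exact ENNReal.measurable_ofReal.comp (hc.measurable.comp ((hw.abs).div_const l))

lemma yf_map_zero (Φ : YoungFunction) : Φ.toFun 0 = 0 := Φ.map_zero

variable {Φ : YoungFunction} {w : (Fin n → ℝ) → ℝ}

lemma eLuxNorm_le_of {Q : Set (Fin n → ℝ)} {l : ℝ} (hl : 0 < l)
    (hint : (∫⁻ x in Q, ENNReal.ofReal (Φ.toFun (|w x| / l))) ≤ volume Q) :
    eLuxNorm Φ.toFun Q w ≤ ENNReal.ofReal l := sInf_le ⟨l, hl, rfl, hint⟩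

lemma lt_integral_of_lt_eLuxNorm {Q : Set (Fin n → ℝ)} {l : ℝ} (hl : 0 < l)
    (h : ENNReal.ofReal l < eLuxNorm Φ.toFun Q w) :
    volume Q < ∫⁻ x in Q, ENNReal.ofReal (Φ.toFun (|w x| / l)) := by
  by_contra hc
  push_neg at hc
  exact absurd (eLuxNorm_le_of hl hc) (not_le.2 h)

lemma eLuxNorm_le_mul_of_subset (hw : Measurable w) {Q R : Set (Fin n → ℝ)} (hQR : Q ⊆ R)
    {K : ℝ} (hK : 1 ≤ K) (hvol : volume R ≤ ENNReal.ofReal K * volume Q) :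
    eLuxNorm Φ.toFun Q w ≤ ENNReal.ofReal K * eLuxNorm Φ.toFun R w := by
  have hK0 : (0:ℝ) < K := lt_of_lt_of_le one_pos hK
  have hKne : ENNReal.ofReal K ≠ 0 := by simp [hK0]
  have hKnetop : ENNReal.ofReal K ≠ ∞ := ENNReal.ofReal_ne_top
  have key : ∀ lam ∈ {lam : ℝ≥0∞ | ∃ l : ℝ, 0 < l ∧ lam = ENNReal.ofReal l ∧
      (∫⁻ x in R, ENNReal.ofReal (Φ.toFun (|w x| / l))) ≤ volume R},
      eLuxNorm Φ.toFun Q w ≤ ENNReal.ofReal K * lam := by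
    rintro lam ⟨l, hl, rfl, hint⟩
    have hl' : 0 < K * l := by positivity
    have hpt : ∀ x, ENNReal.ofReal (Φ.toFun (|w x| / (K * l)))
        ≤ ENNReal.ofReal (K⁻¹ * Φ.toFun (|w x| / l)) := by
      intro x
      apply ENNReal.ofReal_le_ofReal
      have : |w x| / (K * l) = K⁻¹ * (|w x| / l) := by
        field_simp
      rw [this]
      exact yf_scale Φ (by positivity) (by positivity) (inv_le_one_of_one_le₀ hK)
    have step : (∫⁻ x in Q, ENNReal.ofReal (Φ.toFun (|w x| / (K * l)))) ≤ volume Q := by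
      calc (∫⁻ x in Q, ENNReal.ofReal (Φ.toFun (|w x| / (K * l))))
          ≤ ∫⁻ x in R, ENNReal.ofReal (Φ.toFun (|w x| / (K * l))) :=
            lintegral_mono' (Measure.restrict_mono hQR le_rfl) le_rfl
        _ ≤ ∫⁻ x in R, ENNReal.ofReal (K⁻¹ * Φ.toFun (|w x| / l)) := lintegral_mono fun x => hpt x
        _ = ENNReal.ofReal K⁻¹ * ∫⁻ x in R, ENNReal.ofReal (Φ.toFun (|w x| / l)) := by
            rw [← lintegral_const_mul _ (measurable_ofReal_comp Φ hw hl)]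
            congr 1
            funext x
            rw [ENNReal.ofReal_mul (by positivity)]
        _ ≤ ENNReal.ofReal K⁻¹ * volume R := by gcongr
        _ ≤ ENNReal.ofReal K⁻¹ * (ENNReal.ofReal K * volume Q) := by gcongr
        _ = volume Q := by
            rw [← mul_assoc, ← ENNReal.ofReal_mul (by positivity), inv_mul_cancel₀ (ne_of_gt hK0)]
            simp
    calc eLuxNorm Φ.toFun Q w ≤ ENNReal.ofReal (K * l) := eLuxNorm_le_of hl' step
      _ = ENNReal.ofReal K * ENNReal.ofReal l := ENNReal.ofReal_mul hK0.le
  rcases Set.eq_empty_or_nonempty {lam : ℝ≥0∞ | ∃ l : ℝ, 0 < l ∧ lam = ENNReal.ofReal l ∧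
      (∫⁻ x in R, ENNReal.ofReal (Φ.toFun (|w x| / l))) ≤ volume R} with hS | hS
  · unfold eLuxNorm
    rw [hS, sInf_empty, ENNReal.mul_top hKne]
    exact le_top
  · have h1 : eLuxNorm Φ.toFun Q w / ENNReal.ofReal K ≤ eLuxNorm Φ.toFun R w := by
      apply le_sInf
      intro lam hlam
      rw [ENNReal.div_le_iff hKne hKnetop]
      rw [mul_comm]
      exact key lam hlam
    calc eLuxNorm Φ.toFun Q w
        = ENNReal.ofReal K * (eLuxNorm Φ.toFun Q w / ENNReal.ofReal K) :=
          (ENNReal.mul_div_cancel hKne hKnetop).symm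
      _ ≤ ENNReal.ofReal K * eLuxNorm Φ.toFun R w := by gcongr

lemma eLuxNorm_le_MOrlicz {Q : Set (Fin n → ℝ)} (hQ : IsCube Q) {y : Fin n → ℝ} (hy : y ∈ Q) :
    eLuxNorm Φ.toFun Q w ≤ MOrlicz Φ.toFun w y :=
  le_iSup_of_le Q (le_iSup_of_le hQ (le_iSup_of_le hy le_rfl))

lemma ae_zero_of_small_levels (hw : Measurable w) {Q : Set (Fin n → ℝ)}
    (hQt : volume Q ≠ ∞)
    (h0 : ∀ ε : ℝ, 0 < ε → ∃ l : ℝ, 0 < l ∧ l < ε ∧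
      (∫⁻ x in Q, ENNReal.ofReal (Φ.toFun (|w x| / l))) ≤ volume Q) :
    ∀ᵐ x ∂(volume.restrict Q), w x = 0 := by
  set ν := volume.restrict Q with hν
  by_contra hne
  rw [ae_iff] at hne
  have hsub : {x | ¬ w x = 0} ⊆ ⋃ m : ℕ, {x | ((m:ℝ)+1)⁻¹ < |w x|} := by
    intro x hx
    have : 0 < |w x| := abs_pos.2 hx
    obtain ⟨m, hm⟩ := exists_nat_gt (|w x|)⁻¹
    refine Set.mem_iUnion.2 ⟨m, ?_⟩
    have hm1 : (|w x|)⁻¹ < (m:ℝ) + 1 := by linarith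
    have := (inv_lt_inv₀ (by positivity) (by positivity)).2 hm1
    simpa [inv_inv] using this
  have hex : ∃ m : ℕ, ν {x | ((m:ℝ)+1)⁻¹ < |w x|} ≠ 0 := by
    by_contra hall
    push_neg at hall
    exact hne (measure_mono_null hsub (measure_iUnion_null hall))
  obtain ⟨m, hm⟩ := hex
  set ε : ℝ := ((m:ℝ)+1)⁻¹ with hε
  have hεpos : 0 < ε := by positivity
  set T : Set (Fin n → ℝ) := {x | ε < |w x|} with hT
  have hTm : MeasurableSet T := measurableSet_lt measurable_const hw.abs
  have hTfin : ν T ≠ ∞ := by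
    refine ne_top_of_le_ne_top ?_ (measure_mono (Set.subset_univ T))
    rw [hν, Measure.restrict_apply_univ]
    exact hQt
  have hTpos : 0 < (ν T).toReal := ENNReal.toReal_pos hm hTfin
  set r : ℝ := ((volume Q).toReal + 1) / (ν T).toReal with hr
  obtain ⟨s₀, hs₀1, hs₀⟩ := yf_unbounded Φ r
  have hs₀pos : (0:ℝ) < s₀ := lt_of_lt_of_le one_pos hs₀1
  obtain ⟨l, hl0, hlε, hint⟩ := h0 (ε / s₀) (by positivity)
  have hption : ∀ x ∈ T, ENNReal.ofReal r ≤ ENNReal.ofReal (Φ.toFun (|w x| / l)) := by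
    intro x hx
    apply ENNReal.ofReal_le_ofReal
    have h1 : s₀ ≤ |w x| / l := by
      rw [le_div_iff₀ hl0]
      have hsl : l * s₀ < ε := (lt_div_iff₀ hs₀pos).1 hlε
      have hx' : ε < |w x| := hx
      nlinarith [hx', hsl]
    calc r ≤ Φ.toFun s₀ := hs₀
      _ ≤ Φ.toFun (|w x| / l) := yf_mono Φ (Set.mem_Ici.2 (by positivity))
          (Set.mem_Ici.2 (by positivity)) h1
  have hlow : ENNReal.ofReal r * ν T ≤ ∫⁻ x in Q, ENNReal.ofReal (Φ.toFun (|w x| / l)) := by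
    calc ENNReal.ofReal r * ν T = ∫⁻ _ in T, ENNReal.ofReal r ∂ν := by
          rw [setLIntegral_const]
      _ ≤ ∫⁻ x in T, ENNReal.ofReal (Φ.toFun (|w x| / l)) ∂ν := by
          apply lintegral_mono_ae
          filter_upwards [ae_restrict_mem hTm] with x hx using hption x hx
      _ ≤ ∫⁻ x, ENNReal.ofReal (Φ.toFun (|w x| / l)) ∂ν :=
          lintegral_mono' (Measure.restrict_le_self) le_rfl
  have hbig : volume Q < ENNReal.ofReal r * ν T := by
    have h1 : ENNReal.ofReal r * ν T = ENNReal.ofReal (r * (ν T).toReal) := by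
      rw [ENNReal.ofReal_mul (by positivity), ENNReal.ofReal_toReal hTfin]
    have h2 : r * (ν T).toReal = (volume Q).toReal + 1 := by
      rw [hr, div_mul_cancel₀ _ (ne_of_gt hTpos)]
    rw [h1, h2]
    calc volume Q = ENNReal.ofReal (volume Q).toReal := (ENNReal.ofReal_toReal hQt).symm
      _ < ENNReal.ofReal ((volume Q).toReal + 1) := by
          rw [ENNReal.ofReal_lt_ofReal_iff (by positivity)]
          linarith
  exact absurd hint (not_le.2 (lt_of_lt_of_le hbig hlow))

lemma cube_subset_triple {a b : Fin n → ℝ} {h h' : ℝ} (hh' : h' ≤ h)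
    (hne : (cube b h' ∩ cube a h).Nonempty) :
    cube b h' ⊆ cube (fun i => a i - h) (3 * h) := by
  obtain ⟨z, hz1, hz2⟩ := hne
  intro y hy
  rw [mem_cube] at *
  intro i
  constructor
  · linarith [(hz1 i).1, (hz1 i).2, (hz2 i).1, (hy i).1, (hy i).2]
  · linarith [(hz1 i).1, (hz1 i).2, (hz2 i).2, (hy i).1, (hy i).2]

lemma cube_covering {g : (Fin n → ℝ) → ℝ≥0∞} (a : Fin n → ℝ) {h : ℝ} (hh : 0 < h) :
    ∃ U : Set (Fin n → ℝ), MeasurableSet U ∧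
      {x | x ∈ cube a h ∧ ∃ b : Fin n → ℝ, ∃ h' : ℝ, 0 < h' ∧ h' ≤ h ∧ x ∈ cube b h' ∧
        volume (cube b h') < ∫⁻ y in cube b h', g y} ⊆ U ∧
      volume U ≤ ENNReal.ofReal ((5:ℝ) ^ n) * ∫⁻ y in cube (fun i => a i - h) (3 * h), g y := by
  classical
  set P := cube (fun i => a i - h) (3 * h) with hP
  set t : Set ((Fin n → ℝ) × ℝ) := {p | 0 < p.2 ∧ p.2 ≤ h ∧
    (cube p.1 p.2 ∩ cube a h).Nonempty ∧
    volume (cube p.1 p.2) < ∫⁻ y in cube p.1 p.2, g y} with ht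
  obtain ⟨u, hut, hdisj, hcov⟩ := Vitali.exists_disjoint_subfamily_covering_enlargement
    (fun p : (Fin n → ℝ) × ℝ => cube p.1 p.2) t (fun p => p.2) 2 one_lt_two
    (fun p hp => hp.1.le) h (fun p hp => hp.2.1) (fun p hp => cube_nonempty hp.1)
  have subP : ∀ p ∈ t, cube p.1 p.2 ⊆ P := fun p hp => cube_subset_triple hp.2.1 hp.2.2.1
  -- countability of u
  have hucount : u.Countable := by
    set As : (Fin n → ℝ) × ℝ → Set (Fin n → ℝ) :=
      fun p => if p ∈ u then cube p.1 p.2 else ∅ with hAs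
    have hAsm : ∀ p, MeasurableSet (As p) := by
      intro p
      by_cases hp : p ∈ u <;> simp [hAs, hp, measurableSet_cube]
    have hAsd : Pairwise (Function.onFun Disjoint As) := by
      intro p q hpq
      by_cases hp : p ∈ u
      · by_cases hq : q ∈ u
        · simpa [hAs, hp, hq, Function.onFun] using hdisj hp hq hpq
        · simp [hAs, hq, Function.onFun]
      · simp [hAs, hp, Function.onFun]
    have := MeasureTheory.Measure.countable_meas_pos_of_disjoint_iUnion
      (μ := volume) hAsm hAsd
    refine this.mono ?_
    intro p hp
    have hp0 : 0 < p.2 := (hut hp).1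
    simp only [Set.mem_setOf_eq, hAs, if_pos hp]
    exact volume_cube_pos p.1 hp0
  set big : (Fin n → ℝ) × ℝ → Set (Fin n → ℝ) :=
    fun q => cube (fun i => q.1 i - 2 * q.2) (5 * q.2) with hbig
  refine ⟨⋃ q ∈ u, big q, MeasurableSet.biUnion hucount fun q _ => measurableSet_cube _ _, ?_, ?_⟩
  · rintro x ⟨hxQ, b, h', hh'0, hh'h, hxb, hvol⟩
    have hpt : (b, h') ∈ t := ⟨hh'0, hh'h, ⟨x, hxb, hxQ⟩, hvol⟩
    obtain ⟨q, hqu, ⟨z, hz1, hz2⟩, hle⟩ := hcov (b, h') hpt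
    refine Set.mem_biUnion hqu ?_
    rw [hbig, mem_cube]
    intro i
    have hq0 : 0 < q.2 := (hut hqu).1
    have h1 := mem_cube.1 hxb i
    have h2 := mem_cube.1 hz1 i
    have h3 := mem_cube.1 hz2 i
    simp only at hle
    constructor
    · linarith [h1.1, h1.2, h2.1, h2.2, h3.1, h3.2]
    · linarith [h1.1, h1.2, h2.1, h2.2, h3.1, h3.2]
  · calc volume (⋃ q ∈ u, big q) ≤ ∑' q : u, volume (big q) :=
        measure_biUnion_le volume hucount big
      _ ≤ ∑' q : u, ENNReal.ofReal ((5:ℝ) ^ n) * volume (cube (q : (Fin n → ℝ) × ℝ).1 q.1.2) := by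
        apply ENNReal.tsum_le_tsum
        intro q
        have hq0 : 0 < (q : (Fin n → ℝ) × ℝ).2 := (hut q.2).1
        rw [hbig]
        rw [volume_cube _ (by positivity), volume_cube _ hq0.le]
        rw [mul_pow, ← ENNReal.ofReal_mul (by positivity)]
      _ = ENNReal.ofReal ((5:ℝ) ^ n) * ∑' q : u, volume (cube (q:(Fin n → ℝ) × ℝ).1 q.1.2) :=
        ENNReal.tsum_mul_left
      _ ≤ ENNReal.ofReal ((5:ℝ) ^ n) * ∑' q : u,
            ∫⁻ y in cube (q:(Fin n → ℝ) × ℝ).1 q.1.2, g y := by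
        gcongr with q
        exact (hut q.2).2.2.2.le
      _ = ENNReal.ofReal ((5:ℝ) ^ n) * ∫⁻ y in ⋃ q ∈ u, cube q.1 q.2, g y := by
        rw [lintegral_biUnion hucount (fun q _ => measurableSet_cube _ _) hdisj]
      _ ≤ ENNReal.ofReal ((5:ℝ) ^ n) * ∫⁻ y in P, g y := by
        gcongr
        exact Set.iUnion₂_subset fun q hq => subP q (hut hq)

def locP (Φ : YoungFunction) (w : (Fin n → ℝ) → ℝ) (h : ℝ) (x : Fin n → ℝ) : ℝ≥0∞ :=
  ⨆ (p : (Fin n → ℝ) × ℝ) (_ : 0 < p.2 ∧ p.2 ≤ h ∧ x ∈ cube p.1 p.2),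
    eLuxNorm Φ.toFun (cube p.1 p.2) w

def globP (Φ : YoungFunction) (w : (Fin n → ℝ) → ℝ) (h : ℝ) (x : Fin n → ℝ) : ℝ≥0∞ :=
  ⨆ (p : (Fin n → ℝ) × ℝ) (_ : h < p.2 ∧ x ∈ cube p.1 p.2),
    eLuxNorm Φ.toFun (cube p.1 p.2) w

lemma cube_subset_self3 {b : Fin n → ℝ} {h' : ℝ} (hh' : 0 < h') :
    cube b h' ⊆ cube (fun i => b i - h') (3 * h') :=
  cube_subset_triple le_rfl (by rw [Set.inter_self]; exact cube_nonempty hh')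

lemma MOrlicz_le_max (h : ℝ) (x : Fin n → ℝ) :
    MOrlicz Φ.toFun w x ≤ max (locP Φ w h x) (globP Φ w h x) := by
  rw [MOrlicz]
  refine iSup_le fun Q => iSup_le fun hQ => iSup_le fun hx => ?_
  obtain ⟨b, h', hh', rfl⟩ := hQ
  have hQc : (Set.univ.pi fun i => Set.Ico (b i) (b i + h')) = cube b h' := rfl
  rw [hQc] at hx ⊢
  rcases le_or_gt h' h with hc | hc
  · refine le_trans ?_ (le_max_left _ _)
    refine le_iSup_of_le (b, h') ?_
    exact le_iSup (fun _ : (0 < (b,h').2 ∧ (b,h').2 ≤ h ∧ x ∈ cube (b,h').1 (b,h').2) => eLuxNorm Φ.toFun (cube (b,h').1 (b,h').2) w) ⟨hh', hc, hx⟩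
  · refine le_trans ?_ (le_max_right _ _)
    refine le_iSup_of_le (b, h') ?_
    exact le_iSup (fun _ : (h < (b,h').2 ∧ x ∈ cube (b,h').1 (b,h').2) => eLuxNorm Φ.toFun (cube (b,h').1 (b,h').2) w) ⟨hc, hx⟩

lemma locP_le_MOrlicz (h : ℝ) (x : Fin n → ℝ) : locP Φ w h x ≤ MOrlicz Φ.toFun w x := by
  refine iSup_le fun p => iSup_le fun hp => ?_
  exact eLuxNorm_le_MOrlicz (isCube_cube hp.1) hp.2.2

lemma globP_le_mul (hw : Measurable w) {a : Fin n → ℝ} {h : ℝ} (hh : 0 < h)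
    {x y : Fin n → ℝ} (hx : x ∈ cube a h) (hy : y ∈ cube a h) :
    globP Φ w h x ≤ ENNReal.ofReal ((3:ℝ) ^ n) * MOrlicz Φ.toFun w y := by
  refine iSup_le fun p => iSup_le fun hp => ?_
  obtain ⟨hph, hxp⟩ := hp
  have hp0 : 0 < p.2 := lt_trans hh hph
  set R := cube (fun i => p.1 i - p.2) (3 * p.2) with hR
  have hsub : cube p.1 p.2 ⊆ R := cube_subset_self3 hp0
  have hyR : y ∈ R := by
    rw [hR, mem_cube]
    intro i
    have h1 := mem_cube.1 hx i
    have h2 := mem_cube.1 hy i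
    have h3 := mem_cube.1 hxp i
    constructor
    · linarith [h1.1, h1.2, h2.1, h2.2, h3.1, h3.2]
    · linarith [h1.1, h1.2, h2.1, h2.2, h3.1, h3.2]
  have hvol : volume R ≤ ENNReal.ofReal ((3:ℝ)^n) * volume (cube p.1 p.2) := by
    rw [hR, volume_cube _ (by positivity), volume_cube _ hp0.le, mul_pow,
      ← ENNReal.ofReal_mul (by positivity)]
  calc eLuxNorm Φ.toFun (cube p.1 p.2) w
      ≤ ENNReal.ofReal ((3:ℝ)^n) * eLuxNorm Φ.toFun R w :=
        eLuxNorm_le_mul_of_subset hw hsub (one_le_pow₀ (by norm_num)) hvol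
    _ ≤ ENNReal.ofReal ((3:ℝ)^n) * MOrlicz Φ.toFun w y := by
        gcongr
        exact eLuxNorm_le_MOrlicz (isCube_cube (by positivity)) hyR

def Cmain (n : ℕ) (δ : ℝ) : ℝ :=
  ((3:ℝ)^n) ^ δ + (2:ℝ) ^ δ + (15:ℝ)^n * (4:ℝ) ^ δ * (1 - (2:ℝ) ^ (δ - 1))⁻¹

lemma two_rpow_lt_one {δ : ℝ} (hδ1 : δ < 1) : (2:ℝ) ^ (δ - 1) < 1 :=
  Real.rpow_lt_one_of_one_lt_of_neg one_lt_two (by linarith)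

lemma Cmain_pos (n : ℕ) {δ : ℝ} (hδ0 : 0 < δ) (hδ1 : δ < 1) : 0 < Cmain n δ := by
  have h2 : (0:ℝ) < 1 - (2:ℝ) ^ (δ - 1) := by linarith [two_rpow_lt_one hδ1]
  have t1 : (0:ℝ) < ((3:ℝ)^n) ^ δ := Real.rpow_pos_of_pos (by positivity) _
  have t2 : (0:ℝ) < (2:ℝ) ^ δ := Real.rpow_pos_of_pos (by norm_num) _
  have t3 : (0:ℝ) < (15:ℝ)^n * (4:ℝ) ^ δ * (1 - (2:ℝ) ^ (δ - 1))⁻¹ := by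
    have : (0:ℝ) < (4:ℝ) ^ δ := Real.rpow_pos_of_pos (by norm_num) _
    have h15 : (0:ℝ) < (15:ℝ)^n := by positivity
    exact mul_pos (mul_pos h15 this) (inv_pos.2 h2)
  unfold Cmain
  linarith

/-- zero Luxemburg norm from a.e. vanishing -/
lemma eLuxNorm_eq_zero_of_ae_zero {Q : Set (Fin n → ℝ)}
    (hae : ∀ᵐ y ∂(volume.restrict Q), w y = 0) : eLuxNorm Φ.toFun Q w = 0 := by
  have key : ∀ l : ℝ, 0 < l → eLuxNorm Φ.toFun Q w ≤ ENNReal.ofReal l := by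
    intro l hl
    apply eLuxNorm_le_of hl
    have : (∫⁻ x in Q, ENNReal.ofReal (Φ.toFun (|w x| / l))) = 0 := by
      rw [← lintegral_zero (μ := volume.restrict Q)]
      apply lintegral_congr_ae
      filter_upwards [hae] with y hy
      simp [hy, yf_map_zero Φ]
    rw [this]
    exact zero_le
  by_contra hne
  have hpos : 0 < eLuxNorm Φ.toFun Q w := pos_iff_ne_zero.2 hne
  have h1 : eLuxNorm Φ.toFun Q w ≤ 1 := by simpa using key 1 one_pos
  have hfin : eLuxNorm Φ.toFun Q w ≠ ∞ := ne_top_of_le_ne_top one_ne_top h1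
  set c := (eLuxNorm Φ.toFun Q w).toReal with hc
  have hcpos : 0 < c := ENNReal.toReal_pos hne hfin
  have := key (c/2) (by linarith)
  rw [show eLuxNorm Φ.toFun Q w = ENNReal.ofReal c by rw [hc, ENNReal.ofReal_toReal hfin]] at this
  rw [ENNReal.ofReal_le_ofReal_iff (by linarith)] at this
  linarith

lemma geom_bound (n : ℕ) {δ l : ℝ} (hδ0 : 0 < δ) (hδ1 : δ < 1) (hl0 : 0 < l) :
    ∑' k : ℕ, ENNReal.ofReal ((2^(k+1) * l)^δ * ((5:ℝ)^n * ((1/2)^k * (3:ℝ)^n)))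
      ≤ ENNReal.ofReal ((15:ℝ)^n * (4:ℝ)^δ * (1 - (2:ℝ)^(δ-1))⁻¹ * (2:ℝ)^(-δ) * l^δ) := by
  set q : ℝ := (2:ℝ)^(δ-1) with hq
  have hq0 : 0 < q := Real.rpow_pos_of_pos two_pos _
  have hq1 : q < 1 := two_rpow_lt_one hδ1
  have hterm : ∀ k : ℕ, ((2:ℝ)^(k+1) * l)^δ * ((5:ℝ)^n * ((1/2)^k * (3:ℝ)^n))
      = ((15:ℝ)^n * (2:ℝ)^δ * l^δ) * q^k := by
    intro k
    have h1 : ((2:ℝ)^(k+1) * l)^δ = ((2:ℝ)^(k+1))^δ * l^δ :=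
      Real.mul_rpow (by positivity) hl0.le
    have h2 : ((2:ℝ)^(k+1))^δ = (2:ℝ)^δ * ((2:ℝ)^δ)^k := by
      rw [pow_succ, mul_comm ((2:ℝ)^k) 2, Real.mul_rpow (by norm_num) (by positivity),
        ← Real.rpow_natCast_mul (by norm_num), mul_comm (k:ℝ) δ,
        Real.rpow_mul (by norm_num), Real.rpow_natCast]
    have h3 : ((2:ℝ)^δ)^k * (1/2:ℝ)^k = q^k := by
      rw [← mul_pow]
      congr 1
      rw [hq, Real.rpow_sub two_pos, Real.rpow_one]
      ring
    rw [h1, h2]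
    have h15 : (15:ℝ)^n = (5:ℝ)^n * (3:ℝ)^n := by rw [← mul_pow]; norm_num
    calc (2:ℝ)^δ * ((2:ℝ)^δ)^k * l^δ * ((5:ℝ)^n * ((1/2)^k * (3:ℝ)^n))
        = ((5:ℝ)^n * (3:ℝ)^n * (2:ℝ)^δ * l^δ) * (((2:ℝ)^δ)^k * (1/2)^k) := by ring
      _ = ((15:ℝ)^n * (2:ℝ)^δ * l^δ) * q^k := by rw [h3, h15]
  have hsum : ∑' k : ℕ, ENNReal.ofReal ((2^(k+1) * l)^δ * ((5:ℝ)^n * ((1/2)^k * (3:ℝ)^n)))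
      = ENNReal.ofReal ((15:ℝ)^n * (2:ℝ)^δ * l^δ) * (1 - ENNReal.ofReal q)⁻¹ := by
    have : ∀ k : ℕ, ENNReal.ofReal ((2^(k+1) * l)^δ * ((5:ℝ)^n * ((1/2)^k * (3:ℝ)^n)))
        = ENNReal.ofReal ((15:ℝ)^n * (2:ℝ)^δ * l^δ) * (ENNReal.ofReal q)^k := by
      intro k
      rw [hterm k, ENNReal.ofReal_mul (by positivity), ENNReal.ofReal_pow hq0.le]
    rw [tsum_congr this, ENNReal.tsum_mul_left, ENNReal.tsum_geometric]
  rw [hsum]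
  have hqsub : (1 - ENNReal.ofReal q)⁻¹ = ENNReal.ofReal ((1 - q)⁻¹) := by
    rw [← ENNReal.ofReal_one, ← ENNReal.ofReal_sub _ hq0.le, ENNReal.ofReal_inv_of_pos (by linarith)]
  rw [hqsub, ← ENNReal.ofReal_mul (by positivity)]
  apply ENNReal.ofReal_le_ofReal
  have h4 : (4:ℝ)^δ * (2:ℝ)^(-δ) = (2:ℝ)^δ := by
    rw [show (4:ℝ) = 2^(2:ℕ) by norm_num, ← Real.rpow_natCast_mul (by norm_num),
      ← Real.rpow_add two_pos]
    norm_num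
    rw [show (2:ℝ)*δ + -δ = δ by ring]
  calc (15:ℝ)^n * (2:ℝ)^δ * l^δ * (1-q)⁻¹
      = (15:ℝ)^n * ((4:ℝ)^δ * (2:ℝ)^(-δ)) * (1-q)⁻¹ * l^δ := by rw [h4]; ring
    _ = (15:ℝ)^n * (4:ℝ)^δ * (1-q)⁻¹ * (2:ℝ)^(-δ) * l^δ := by ring
    _ ≤ (15:ℝ)^n * (4:ℝ)^δ * (1-q)⁻¹ * (2:ℝ)^(-δ) * l^δ := le_rfl

lemma main_estimate (hw : Measurable w)
    (hfin : ∀ᵐ x, MOrlicz Φ.toFun w x < ∞) {δ : ℝ} (hδ0 : 0 < δ) (hδ1 : δ < 1)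
    (a : Fin n → ℝ) {h : ℝ} (hh : 0 < h) :
    ∃ F : (Fin n → ℝ) → ℝ≥0∞, Measurable F ∧
      (∀ᵐ x ∂(volume.restrict (cube a h)), MOrlicz Φ.toFun w x ^ δ ≤ F x) ∧
      (∫⁻ x in cube a h, F x) ≤ ENNReal.ofReal (Cmain n δ) * volume (cube a h) *
        (essInf (MOrlicz Φ.toFun w) (volume.restrict (cube a h))) ^ δ := by
  set M := MOrlicz Φ.toFun w with hM
  set Q := cube a h with hQ
  set A := essInf M (volume.restrict Q) with hA
  set Q3 := cube (fun i => a i - h) (3 * h) with hQ3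
  have hQm : MeasurableSet Q := measurableSet_cube a h
  have hQ0 : volume Q ≠ 0 := (volume_cube_pos a hh).ne'
  have hQt : volume Q ≠ ∞ := volume_cube_ne_top a h
  have hQsub3 : Q ⊆ Q3 := by
    rw [hQ, hQ3]
    exact cube_subset_triple le_rfl (by rw [Set.inter_self]; exact cube_nonempty hh)
  have hQ3vol : volume Q3 = ENNReal.ofReal ((3:ℝ)^n) * volume Q := by
    rw [hQ3, hQ, volume_cube _ (by positivity), volume_cube _ hh.le, mul_pow,
      ← ENNReal.ofReal_mul (by positivity)]
  set a0 := eLuxNorm Φ.toFun Q3 w with ha0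
  have ha0M : ∀ y ∈ Q, a0 ≤ M y := fun y hy =>
    eLuxNorm_le_MOrlicz (isCube_cube (by positivity)) (hQsub3 hy)
  have ha0A : a0 ≤ A := by
    refine le_essInf_of_ae_le _ ?_
    filter_upwards [ae_restrict_mem hQm] with y hy using ha0M y hy
  have ha0fin : a0 ≠ ∞ := by
    intro htop
    have hsub : Q ⊆ {x | ¬ M x < ∞} := by
      intro y hy
      simp only [Set.mem_setOf_eq, not_lt, top_le_iff]
      have := ha0M y hy
      rw [htop] at this
      exact eq_top_iff.2 this
    have : volume Q = 0 := measure_mono_null hsub (by rw [← ae_iff]; exact hfin)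
    exact hQ0 this
  -- the glob part bound
  have hG : ∀ x ∈ Q, globP Φ w h x ≤ ENNReal.ofReal ((3:ℝ)^n) * A := by
    intro x hx
    have h3ne : (ENNReal.ofReal ((3:ℝ)^n)) ≠ 0 := by
      simp only [ne_eq, ENNReal.ofReal_eq_zero, not_le]; positivity
    have h3net : (ENNReal.ofReal ((3:ℝ)^n)) ≠ ∞ := ENNReal.ofReal_ne_top
    have hae : ∀ᵐ y ∂(volume.restrict Q), globP Φ w h x / ENNReal.ofReal ((3:ℝ)^n) ≤ M y := by
      filter_upwards [ae_restrict_mem hQm] with y hy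
      rw [ENNReal.div_le_iff h3ne h3net, mul_comm]
      exact globP_le_mul hw hh hx hy
    have := le_essInf_of_ae_le _ hae
    rw [ENNReal.div_le_iff h3ne h3net] at this
    rw [mul_comm] at this
    exact this
  rcases eq_or_lt_of_le (zero_le : 0 ≤ a0) with hz | ha0pos
  · -- degenerate case: a0 = 0, so w = 0 a.e. on Q3 and the local part vanishes
    have hz' : a0 = 0 := hz.symm
    have hw0 : ∀ᵐ y ∂(volume.restrict Q3), w y = 0 := by
      apply ae_zero_of_small_levels hw (volume_cube_ne_top _ _)
      intro ε hε
      have hlt : eLuxNorm Φ.toFun Q3 w < ENNReal.ofReal ε := by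
        rw [← ha0, hz']
        simpa using hε
      rw [eLuxNorm] at hlt
      obtain ⟨lam, hlam, hlt2⟩ := sInf_lt_iff.1 hlt
      obtain ⟨l, hl0, rfl, hint⟩ := hlam
      exact ⟨l, hl0, by rwa [ENNReal.ofReal_lt_ofReal_iff hε] at hlt2, hint⟩
    have hloc0 : ∀ x ∈ Q, locP Φ w h x = 0 := by
      intro x hx
      refine le_antisymm (iSup_le fun p => iSup_le fun hp => ?_) (zero_le)
      obtain ⟨hp0, hph, hxp⟩ := hp
      have hsub : cube p.1 p.2 ⊆ Q3 := by
        rw [hQ3]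
        exact cube_subset_triple hph ⟨x, hxp, hx⟩
      have hz3 : ∀ᵐ y ∂(volume.restrict (cube p.1 p.2)), w y = 0 :=
        ae_restrict_of_ae_restrict_of_subset hsub hw0
      simp [eLuxNorm_eq_zero_of_ae_zero hz3]
    refine ⟨fun _ => (ENNReal.ofReal ((3:ℝ)^n))^δ * A^δ, measurable_const, ?_, ?_⟩
    · filter_upwards [ae_restrict_mem hQm] with x hx
      have h1 : M x ≤ ENNReal.ofReal ((3:ℝ)^n) * A :=
        le_trans (MOrlicz_le_max h x)
          (max_le (by rw [hloc0 x hx]; exact zero_le) (hG x hx))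
      calc M x ^ δ ≤ (ENNReal.ofReal ((3:ℝ)^n) * A) ^ δ := ENNReal.rpow_le_rpow h1 hδ0.le
        _ = (ENNReal.ofReal ((3:ℝ)^n))^δ * A^δ := ENNReal.mul_rpow_of_nonneg _ _ hδ0.le
    · rw [lintegral_const, Measure.restrict_apply_univ]
      have hc : (ENNReal.ofReal ((3:ℝ)^n))^δ ≤ ENNReal.ofReal (Cmain n δ) := by
        rw [ENNReal.ofReal_rpow_of_pos (by positivity)]
        apply ENNReal.ofReal_le_ofReal
        have h2 : (0:ℝ) < 1 - (2:ℝ) ^ (δ - 1) := by linarith [two_rpow_lt_one hδ1]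
        have t2 : (0:ℝ) < (2:ℝ) ^ δ := Real.rpow_pos_of_pos (by norm_num) _
        have t3 : (0:ℝ) < (15:ℝ)^n * (4:ℝ) ^ δ * (1 - (2:ℝ) ^ (δ - 1))⁻¹ := by
          have h4 : (0:ℝ) < (4:ℝ) ^ δ := Real.rpow_pos_of_pos (by norm_num) _
          have h15 : (0:ℝ) < (15:ℝ)^n := by positivity
          exact mul_pos (mul_pos h15 h4) (inv_pos.2 h2)
        unfold Cmain
        linarith
      calc (ENNReal.ofReal ((3:ℝ)^n))^δ * A^δ * volume Q
          ≤ ENNReal.ofReal (Cmain n δ) * A^δ * volume Q := by gcongr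
        _ = ENNReal.ofReal (Cmain n δ) * volume Q * A^δ := by ring
  · -- main case : 0 < a0
    have h2a : eLuxNorm Φ.toFun Q3 w < 2 * a0 := by
      rw [← ha0]
      conv_lhs => rw [← one_mul a0]
      exact ENNReal.mul_lt_mul_left (ne_of_gt ha0pos) ha0fin one_lt_two
    rw [eLuxNorm] at h2a
    obtain ⟨lam, hlam, hlam2⟩ := sInf_lt_iff.1 h2a
    obtain ⟨l, hl0, rfl, hint⟩ := hlam
    have hl2A : ENNReal.ofReal l ≤ 2 * A := le_trans hlam2.le (mul_le_mul_right ha0A 2)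
    -- integral bound for dilated levels
    have hgk : ∀ k : ℕ, (∫⁻ y in Q3, ENNReal.ofReal (Φ.toFun (|w y| / (2^k * l))))
        ≤ ENNReal.ofReal ((1/2:ℝ)^k) * (ENNReal.ofReal ((3:ℝ)^n) * volume Q) := by
      intro k
      have hpt : ∀ y : Fin n → ℝ, ENNReal.ofReal (Φ.toFun (|w y| / (2^k * l)))
          ≤ ENNReal.ofReal ((1/2:ℝ)^k * Φ.toFun (|w y| / l)) := by
        intro y
        apply ENNReal.ofReal_le_ofReal
        have heq : |w y| / (2^k * l) = (1/2:ℝ)^k * (|w y| / l) := by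
          rw [div_pow, one_pow]
          field_simp
        rw [heq]
        refine yf_scale Φ (by positivity) (by positivity) ?_
        apply pow_le_one₀ <;> norm_num
      calc (∫⁻ y in Q3, ENNReal.ofReal (Φ.toFun (|w y| / (2^k * l))))
          ≤ ∫⁻ y in Q3, ENNReal.ofReal ((1/2:ℝ)^k * Φ.toFun (|w y| / l)) :=
            lintegral_mono fun y => hpt y
        _ = ENNReal.ofReal ((1/2:ℝ)^k) * ∫⁻ y in Q3, ENNReal.ofReal (Φ.toFun (|w y| / l)) := by
            rw [← lintegral_const_mul _ (measurable_ofReal_comp Φ hw hl0)]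
            congr 1
            funext y
            rw [ENNReal.ofReal_mul (by positivity)]
        _ ≤ ENNReal.ofReal ((1/2:ℝ)^k) * volume Q3 := by gcongr
        _ = ENNReal.ofReal ((1/2:ℝ)^k) * (ENNReal.ofReal ((3:ℝ)^n) * volume Q) := by
            rw [hQ3vol]
    -- covering sets
    have hcov := fun k : ℕ => cube_covering
      (g := fun y => ENNReal.ofReal (Φ.toFun (|w y| / (2^k * l)))) a hh
    choose U hUm hUsub hUvol using hcov
    have hUvol' : ∀ k : ℕ, volume (U k) ≤
        ENNReal.ofReal ((5:ℝ)^n * ((1/2:ℝ)^k * (3:ℝ)^n)) * volume Q := by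
      intro k
      calc volume (U k) ≤ ENNReal.ofReal ((5:ℝ)^n)
            * ∫⁻ y in cube (fun i => a i - h) (3*h), ENNReal.ofReal (Φ.toFun (|w y| / (2^k * l))) :=
            hUvol k
        _ ≤ ENNReal.ofReal ((5:ℝ)^n)
            * (ENNReal.ofReal ((1/2:ℝ)^k) * (ENNReal.ofReal ((3:ℝ)^n) * volume Q)) := by
            gcongr
            exact hgk k
        _ = ENNReal.ofReal ((5:ℝ)^n * ((1/2:ℝ)^k * (3:ℝ)^n)) * volume Q := by
            rw [ENNReal.ofReal_mul (by positivity), ENNReal.ofReal_mul (by positivity)]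
            ring
    set F : (Fin n → ℝ) → ℝ≥0∞ := fun x =>
      (ENNReal.ofReal ((3:ℝ)^n))^δ * A^δ + ((ENNReal.ofReal l)^δ
        + ∑' k : ℕ, (U k).indicator (fun _ => (ENNReal.ofReal (2^(k+1) * l))^δ) x) with hF
    have hFm : Measurable F := by
      apply Measurable.add measurable_const
      apply Measurable.add measurable_const
      exact Measurable.ennreal_tsum fun k => measurable_const.indicator (hUm k)
    have hbound : ∀ᵐ x ∂(volume.restrict Q), M x ^ δ ≤ F x := by
      filter_upwards [ae_restrict_mem hQm, ae_restrict_of_ae hfin] with x hx hMx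
      have hlocM : locP Φ w h x ≤ M x := locP_le_MOrlicz h x
      have hlocfin : locP Φ w h x ≠ ∞ := ne_top_of_le_ne_top hMx.ne hlocM
      have hmax : M x ^ δ ≤ locP Φ w h x ^ δ + globP Φ w h x ^ δ := by
        refine le_trans (ENNReal.rpow_le_rpow (MOrlicz_le_max h x) hδ0.le) ?_
        rcases max_cases (locP Φ w h x) (globP Φ w h x) with ⟨hmeq, _⟩ | ⟨hmeq, _⟩ <;> rw [hmeq]
        · exact le_self_add
        · exact le_add_self
      have hglob : globP Φ w h x ^ δ ≤ (ENNReal.ofReal ((3:ℝ)^n))^δ * A^δ := by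
        rw [← ENNReal.mul_rpow_of_nonneg _ _ hδ0.le]
        exact ENNReal.rpow_le_rpow (hG x hx) hδ0.le
      have hloc : locP Φ w h x ^ δ ≤ (ENNReal.ofReal l)^δ
          + ∑' k : ℕ, (U k).indicator (fun _ => (ENNReal.ofReal (2^(k+1) * l))^δ) x := by
        rcases le_or_gt (locP Φ w h x) (ENNReal.ofReal l) with hc | hc
        · exact le_trans (ENNReal.rpow_le_rpow hc hδ0.le) le_self_add
        · have hex : ∃ k : ℕ, ¬ (ENNReal.ofReal (2^k * l) < locP Φ w h x) := by
            obtain ⟨k, hk⟩ := pow_unbounded_of_one_lt ((locP Φ w h x).toReal / l)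
              (one_lt_two (α := ℝ))
            refine ⟨k, not_lt.2 ?_⟩
            rw [← ENNReal.ofReal_toReal hlocfin]
            apply ENNReal.ofReal_le_ofReal
            rw [div_lt_iff₀ hl0] at hk
            exact hk.le
          have hspec : locP Φ w h x ≤ ENNReal.ofReal (2^(Nat.find hex) * l) :=
            not_lt.1 (Nat.find_spec hex)
          have hk0pos : 0 < Nat.find hex := by
            rcases Nat.eq_zero_or_pos (Nat.find hex) with h0 | h0
            · exfalso
              rw [h0, pow_zero, one_mul] at hspec
              exact absurd hc (not_lt.2 hspec)
            · exact h0
          obtain ⟨m, hm⟩ : ∃ m, Nat.find hex = m + 1 :=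
            ⟨Nat.find hex - 1, (Nat.succ_pred_eq_of_pos hk0pos).symm⟩
          have hmlt : ENNReal.ofReal (2^m * l) < locP Φ w h x :=
            not_not.1 (Nat.find_min hex (by omega))
          have hxU : x ∈ U m := by
            apply hUsub m
            rw [locP] at hmlt
            obtain ⟨p, hp⟩ := lt_iSup_iff.1 hmlt
            obtain ⟨hpcond, hplt⟩ := lt_iSup_iff.1 hp
            exact ⟨hx, p.1, p.2, hpcond.1, hpcond.2.1, hpcond.2.2,
              lt_integral_of_lt_eLuxNorm (by positivity) hplt⟩
          calc locP Φ w h x ^ δ ≤ (ENNReal.ofReal (2^(m+1) * l))^δ := by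
                refine ENNReal.rpow_le_rpow ?_ hδ0.le
                rw [hm] at hspec
                exact hspec
            _ = (U m).indicator (fun _ => (ENNReal.ofReal (2^(m+1) * l))^δ) x :=
                (Set.indicator_of_mem hxU (fun _ => (ENNReal.ofReal (2^(m+1) * l))^δ)).symm
            _ ≤ ∑' k : ℕ, (U k).indicator (fun _ => (ENNReal.ofReal (2^(k+1) * l))^δ) x :=
                ENNReal.le_tsum m
            _ ≤ (ENNReal.ofReal l)^δ
                + ∑' k : ℕ, (U k).indicator (fun _ => (ENNReal.ofReal (2^(k+1) * l))^δ) x :=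
                le_add_self
      calc M x ^ δ ≤ locP Φ w h x ^ δ + globP Φ w h x ^ δ := hmax
        _ = globP Φ w h x ^ δ + locP Φ w h x ^ δ := add_comm _ _
        _ ≤ F x := add_le_add hglob hloc
    refine ⟨F, hFm, hbound, ?_⟩
    -- compute and bound the integral
    have hofl : (ENNReal.ofReal l)^δ ≤ ENNReal.ofReal ((2:ℝ)^δ) * A^δ := by
      calc (ENNReal.ofReal l)^δ ≤ (2 * A)^δ := ENNReal.rpow_le_rpow hl2A hδ0.le
        _ = (2:ℝ≥0∞)^δ * A^δ := ENNReal.mul_rpow_of_nonneg _ _ hδ0.le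
        _ = ENNReal.ofReal ((2:ℝ)^δ) * A^δ := by
            rw [← ENNReal.ofReal_rpow_of_pos two_pos, ENNReal.ofReal_ofNat]
    have hc1 : (ENNReal.ofReal ((3:ℝ)^n))^δ = ENNReal.ofReal (((3:ℝ)^n)^δ) :=
      ENNReal.ofReal_rpow_of_pos (by positivity)
    have hint1 : (∫⁻ x in Q, F x) = (ENNReal.ofReal ((3:ℝ)^n))^δ * A^δ * volume Q
        + ((ENNReal.ofReal l)^δ * volume Q
          + ∑' k : ℕ, (ENNReal.ofReal (2^(k+1) * l))^δ * volume (U k ∩ Q)) := by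
      rw [hF, lintegral_add_left measurable_const, lintegral_add_left measurable_const,
        lintegral_const, Measure.restrict_apply_univ, lintegral_const,
        Measure.restrict_apply_univ]
      congr 2
      rw [lintegral_tsum (fun k => (measurable_const.indicator (hUm k)).aemeasurable)]
      refine tsum_congr fun k => ?_
      rw [lintegral_indicator (hUm k), setLIntegral_const, Measure.restrict_apply (hUm k)]
    have hterm3 : (∑' k : ℕ, (ENNReal.ofReal (2^(k+1) * l))^δ * volume (U k ∩ Q))
        ≤ ENNReal.ofReal ((15:ℝ)^n * (4:ℝ)^δ * (1 - (2:ℝ)^(δ-1))⁻¹) * A^δ * volume Q := by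
      have h2inv : (2:ℝ)^(-δ) * (2:ℝ)^δ = 1 := by
        rw [← Real.rpow_add two_pos]
        simp
      have hq2 : (0:ℝ) < 1 - (2:ℝ) ^ (δ - 1) := by linarith [two_rpow_lt_one hδ1]
      have hpos3 : (0:ℝ) ≤ (15:ℝ)^n * (4:ℝ)^δ * (1 - (2:ℝ)^(δ-1))⁻¹ := by
        have h4 : (0:ℝ) ≤ (4:ℝ)^δ := (Real.rpow_pos_of_pos (by norm_num) _).le
        have h15 : (0:ℝ) ≤ (15:ℝ)^n := by positivity
        exact mul_nonneg (mul_nonneg h15 h4) (inv_nonneg.2 hq2.le)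
      have hpos4 : (0:ℝ) ≤ (15:ℝ)^n * (4:ℝ)^δ * (1 - (2:ℝ)^(δ-1))⁻¹ * (2:ℝ)^(-δ) :=
        mul_nonneg hpos3 (Real.rpow_pos_of_pos (by norm_num) _).le
      have hceq : ((15:ℝ)^n * (4:ℝ)^δ * (1 - (2:ℝ)^(δ-1))⁻¹ * (2:ℝ)^(-δ)) * (2:ℝ)^δ
          = (15:ℝ)^n * (4:ℝ)^δ * (1 - (2:ℝ)^(δ-1))⁻¹ := by
        rw [mul_assoc, h2inv, mul_one]
      calc (∑' k : ℕ, (ENNReal.ofReal (2^(k+1) * l))^δ * volume (U k ∩ Q))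
          ≤ ∑' k : ℕ, ENNReal.ofReal ((2^(k+1) * l)^δ * ((5:ℝ)^n * ((1/2:ℝ)^k * (3:ℝ)^n)))
              * volume Q := by
            refine ENNReal.tsum_le_tsum fun k => ?_
            have hA1 : (ENNReal.ofReal (2^(k+1) * l))^δ = ENNReal.ofReal ((2^(k+1) * l)^δ) :=
              ENNReal.ofReal_rpow_of_pos (by positivity)
            calc (ENNReal.ofReal (2^(k+1) * l))^δ * volume (U k ∩ Q)
                = ENNReal.ofReal ((2^(k+1) * l)^δ) * volume (U k ∩ Q) := by rw [hA1]
              _ ≤ ENNReal.ofReal ((2^(k+1) * l)^δ)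
                  * (ENNReal.ofReal ((5:ℝ)^n * ((1/2:ℝ)^k * (3:ℝ)^n)) * volume Q) := by
                  gcongr
                  exact le_trans (measure_mono Set.inter_subset_left) (hUvol' k)
              _ = ENNReal.ofReal ((2^(k+1) * l)^δ * ((5:ℝ)^n * ((1/2:ℝ)^k * (3:ℝ)^n)))
                  * volume Q := by
                  rw [ENNReal.ofReal_mul (by positivity : (0:ℝ) ≤ ((2:ℝ)^(k+1) * l)^δ),
                    ENNReal.ofReal_mul (by positivity : (0:ℝ) ≤ (5:ℝ)^n)]
                  ring
        _ = (∑' k : ℕ, ENNReal.ofReal ((2^(k+1) * l)^δ * ((5:ℝ)^n * ((1/2:ℝ)^k * (3:ℝ)^n))))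
              * volume Q := ENNReal.tsum_mul_right
        _ ≤ ENNReal.ofReal ((15:ℝ)^n * (4:ℝ)^δ * (1 - (2:ℝ)^(δ-1))⁻¹ * (2:ℝ)^(-δ) * l^δ)
              * volume Q := mul_le_mul_left (geom_bound n hδ0 hδ1 hl0) _
        _ = ENNReal.ofReal ((15:ℝ)^n * (4:ℝ)^δ * (1 - (2:ℝ)^(δ-1))⁻¹ * (2:ℝ)^(-δ))
              * (ENNReal.ofReal l)^δ * volume Q := by
            rw [ENNReal.ofReal_mul hpos4, ENNReal.ofReal_rpow_of_pos hl0]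
        _ ≤ ENNReal.ofReal ((15:ℝ)^n * (4:ℝ)^δ * (1 - (2:ℝ)^(δ-1))⁻¹ * (2:ℝ)^(-δ))
              * (ENNReal.ofReal ((2:ℝ)^δ) * A^δ) * volume Q := by
            rw [mul_assoc _ ((ENNReal.ofReal l)^δ) (volume Q),
              mul_assoc _ (ENNReal.ofReal ((2:ℝ)^δ) * A^δ) (volume Q)]
            gcongr
        _ = ENNReal.ofReal ((15:ℝ)^n * (4:ℝ)^δ * (1 - (2:ℝ)^(δ-1))⁻¹) * A^δ * volume Q := by
            rw [show ENNReal.ofReal ((15:ℝ)^n * (4:ℝ)^δ * (1 - (2:ℝ)^(δ-1))⁻¹ * (2:ℝ)^(-δ))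
                * (ENNReal.ofReal ((2:ℝ)^δ) * A^δ) * volume Q
                = (ENNReal.ofReal ((15:ℝ)^n * (4:ℝ)^δ * (1 - (2:ℝ)^(δ-1))⁻¹ * (2:ℝ)^(-δ))
                  * ENNReal.ofReal ((2:ℝ)^δ)) * A^δ * volume Q from by ring,
              ← ENNReal.ofReal_mul hpos4, hceq]
    rw [hint1]
    have e2 : (ENNReal.ofReal l)^δ * volume Q
        ≤ ENNReal.ofReal ((2:ℝ)^δ) * A^δ * volume Q := by
      calc (ENNReal.ofReal l)^δ * volume Q ≤ (ENNReal.ofReal ((2:ℝ)^δ) * A^δ) * volume Q :=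
          mul_le_mul_left hofl _
        _ = ENNReal.ofReal ((2:ℝ)^δ) * A^δ * volume Q := by ring
    have hCsplit : ENNReal.ofReal (Cmain n δ) = ENNReal.ofReal (((3:ℝ)^n)^δ)
        + ENNReal.ofReal ((2:ℝ)^δ)
        + ENNReal.ofReal ((15:ℝ)^n * (4:ℝ)^δ * (1 - (2:ℝ)^(δ-1))⁻¹) := by
      unfold Cmain
      have h2 : (0:ℝ) < 1 - (2:ℝ) ^ (δ - 1) := by linarith [two_rpow_lt_one hδ1]
      have hpos3 : (0:ℝ) ≤ (15:ℝ)^n * (4:ℝ)^δ * (1 - (2:ℝ)^(δ-1))⁻¹ := by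
        have h4 : (0:ℝ) ≤ (4:ℝ)^δ := (Real.rpow_pos_of_pos (by norm_num) _).le
        have h15 : (0:ℝ) ≤ (15:ℝ)^n := by positivity
        exact mul_nonneg (mul_nonneg h15 h4) (inv_nonneg.2 h2.le)
      have hposa : (0:ℝ) ≤ ((3:ℝ)^n)^δ := (Real.rpow_pos_of_pos (by positivity) _).le
      have hposb : (0:ℝ) ≤ (2:ℝ)^δ := (Real.rpow_pos_of_pos (by norm_num) _).le
      rw [ENNReal.ofReal_add (by positivity) hpos3, ENNReal.ofReal_add hposa hposb]
    calc (ENNReal.ofReal ((3:ℝ)^n))^δ * A^δ * volume Q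
        + ((ENNReal.ofReal l)^δ * volume Q
          + ∑' k : ℕ, (ENNReal.ofReal (2^(k+1) * l))^δ * volume (U k ∩ Q))
        ≤ ENNReal.ofReal (((3:ℝ)^n)^δ) * A^δ * volume Q
          + (ENNReal.ofReal ((2:ℝ)^δ) * A^δ * volume Q
            + ENNReal.ofReal ((15:ℝ)^n * (4:ℝ)^δ * (1 - (2:ℝ)^(δ-1))⁻¹) * A^δ * volume Q) := by
          rw [hc1]
          exact add_le_add le_rfl (add_le_add e2 hterm3)
      _ = ENNReal.ofReal (Cmain n δ) * volume Q * A^δ := by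
          rw [hCsplit]
          ring

lemma essInf_ne_top {Φ : YoungFunction} {w : (Fin n → ℝ) → ℝ}
    (hfin : ∀ᵐ x, MOrlicz Φ.toFun w x < ∞) (a : Fin n → ℝ) {h : ℝ} (hh : 0 < h) :
    essInf (MOrlicz Φ.toFun w) (volume.restrict (cube a h)) ≠ ∞ := by
  set ν := volume.restrict (cube a h) with hν
  have hνne : ν ≠ 0 := by
    simp only [hν, Ne, Measure.restrict_eq_zero]
    exact (volume_cube_pos a hh).ne'
  have hne : (ae ν).NeBot := ae_neBot.2 hνne
  have h1 : ∀ᵐ x ∂ν, essInf (MOrlicz Φ.toFun w) ν ≤ MOrlicz Φ.toFun w x := ae_essInf_le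
  have h2 : ∀ᵐ x ∂ν, MOrlicz Φ.toFun w x < ∞ := ae_restrict_of_ae hfin
  obtain ⟨x, hx1, hx2⟩ := (h1.and h2).exists
  exact (lt_of_le_of_lt hx1 hx2).ne

lemma A1_per_cube (hw : Measurable w)
    (hfin : ∀ᵐ x, MOrlicz Φ.toFun w x < ∞) {δ : ℝ} (hδ0 : 0 < δ) (hδ1 : δ < 1)
    (a : Fin n → ℝ) {h : ℝ} (hh : 0 < h) :
    lavg (fun x => MOrlicz Φ.toFun w x ^ δ) (cube a h)
      * essSup (fun x => (MOrlicz Φ.toFun w x ^ δ)⁻¹) (volume.restrict (cube a h))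
      ≤ ENNReal.ofReal (Cmain n δ) := by
  set M := MOrlicz Φ.toFun w with hM
  set Q := cube a h with hQ
  set A := essInf M (volume.restrict Q) with hA
  have hQ0 : volume Q ≠ 0 := (volume_cube_pos a hh).ne'
  have hQt : volume Q ≠ ∞ := volume_cube_ne_top a h
  have hAt : A ≠ ∞ := essInf_ne_top hfin a hh
  obtain ⟨F, hFm, hFb, hFi⟩ := main_estimate hw hfin hδ0 hδ1 a hh
  have h1 : lavg (fun x => M x ^ δ) Q ≤ ENNReal.ofReal (Cmain n δ) * A ^ δ := by
    rw [lavg, ENNReal.div_le_iff hQ0 hQt]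
    calc (∫⁻ x in Q, M x ^ δ) ≤ ∫⁻ x in Q, F x := lintegral_mono_ae hFb
      _ ≤ ENNReal.ofReal (Cmain n δ) * volume Q * A ^ δ := hFi
      _ = ENNReal.ofReal (Cmain n δ) * A ^ δ * volume Q := by ring
  have h2 : essSup (fun x => (M x ^ δ)⁻¹) (volume.restrict Q) ≤ (A ^ δ)⁻¹ := by
    refine essSup_le_of_ae_le _ ?_
    filter_upwards [ae_essInf_le (f := M) (μ := volume.restrict Q)] with x hx
    exact ENNReal.inv_le_inv.2 (ENNReal.rpow_le_rpow hx hδ0.le)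
  rcases eq_or_ne A 0 with hA0 | hA0
  · have : lavg (fun x => M x ^ δ) Q = 0 := by
      have := h1
      rw [hA0, ENNReal.zero_rpow_of_pos hδ0, mul_zero] at this
      exact le_antisymm this (zero_le)
    rw [this, zero_mul]
    exact zero_le
  · have hAδ0 : A ^ δ ≠ 0 := by
      simp only [ne_eq, ENNReal.rpow_eq_zero_iff, not_or]
      constructor
      · rintro ⟨h0, _⟩; exact hA0 h0
      · rintro ⟨htop, _⟩; exact hAt htop
    have hAδt : A ^ δ ≠ ∞ := ENNReal.rpow_ne_top_of_nonneg hδ0.le hAt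
    calc lavg (fun x => M x ^ δ) Q * essSup (fun x => (M x ^ δ)⁻¹) (volume.restrict Q)
        ≤ (ENNReal.ofReal (Cmain n δ) * A ^ δ) * (A ^ δ)⁻¹ := mul_le_mul' h1 h2
      _ = ENNReal.ofReal (Cmain n δ) * (A ^ δ * (A ^ δ)⁻¹) := by ring
      _ = ENNReal.ofReal (Cmain n δ) := by rw [ENNReal.mul_inv_cancel hAδ0 hAδt, mul_one]


end CRaux

namespace CRaux
variable {n : ℕ} {Φ : YoungFunction} {w : (Fin n → ℝ) → ℝ}
lemma RH_per_cube (hw : Measurable w)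
    (hfin : ∀ᵐ x, MOrlicz Φ.toFun w x < ∞) {lam : ℝ} (hlam : 0 < lam)
    (a : Fin n → ℝ) {h : ℝ} (hh : 0 < h) :
    essSup (fun x => MOrlicz Φ.toFun w x ^ (-lam)) (volume.restrict (cube a h))
      / lavg (fun x => MOrlicz Φ.toFun w x ^ (-lam)) (cube a h)
      ≤ ENNReal.ofReal (2 * (4 * (Cmain n (1/2))^2) ^ lam) := by
  set M := MOrlicz Φ.toFun w with hM
  set Q := cube a h with hQ
  set ν := volume.restrict Q with hν
  set A := essInf M ν with hA
  set v : (Fin n → ℝ) → ℝ≥0∞ := fun x => M x ^ (-lam) with hv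
  have hQ0 : volume Q ≠ 0 := (volume_cube_pos a hh).ne'
  have hQt : volume Q ≠ ∞ := volume_cube_ne_top a h
  have hAt : A ≠ ∞ := essInf_ne_top hfin a hh
  set c' := Cmain n (1/2) with hc'
  have hc'0 : (0:ℝ) < c' := Cmain_pos n (by norm_num) (by norm_num)
  obtain ⟨F, hFm, hFb, hFi⟩ := main_estimate hw hfin (δ := 1/2) (by norm_num) (by norm_num) a hh
  have hsup : essSup v ν ≤ A ^ (-lam) := by
    refine essSup_le_of_ae_le _ ?_
    filter_upwards [ae_essInf_le (f := M) (μ := ν)] with x hx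
    show M x ^ (-lam) ≤ A ^ (-lam)
    rw [ENNReal.rpow_neg, ENNReal.rpow_neg]
    exact ENNReal.inv_le_inv.2 (ENNReal.rpow_le_rpow hx hlam.le)
  rcases eq_or_ne A 0 with hA0 | hA0
  · -- A = 0 : the average is infinite, quotient is zero
    have hF0 : (∫⁻ x in Q, F x) = 0 := by
      refine le_antisymm ?_ (zero_le)
      refine le_trans hFi ?_
      rw [← hA, hA0, ENNReal.zero_rpow_of_pos (by norm_num : (0:ℝ) < 1/2), mul_zero]
    have hFz : ∀ᵐ x ∂ν, F x = 0 := (lintegral_eq_zero_iff hFm).1 hF0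
    have hMz : ∀ᵐ x ∂ν, M x = 0 := by
      filter_upwards [hFz, hFb] with x h1 h2
      have h3 : M x ^ ((1:ℝ)/2) = 0 := le_antisymm (h1 ▸ h2) (zero_le)
      rw [ENNReal.rpow_eq_zero_iff] at h3
      rcases h3 with ⟨h4, _⟩ | ⟨_, h5⟩
      · exact h4
      · norm_num at h5
    have hvi : ∀ᵐ x ∂ν, v x = ∞ := by
      filter_upwards [hMz] with x hx
      rw [hv]
      simp only [hx]
      exact ENNReal.zero_rpow_of_neg (by linarith)
    have hint : (∫⁻ x in Q, v x) = ∞ := by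
      rw [← hν, lintegral_congr_ae hvi, lintegral_const, Measure.restrict_apply_univ]
      exact ENNReal.top_mul hQ0
    have hlavg : lavg v Q = ∞ := by
      rw [lavg, hint]
      exact ENNReal.top_div_of_ne_top hQt
    rw [hlavg, ENNReal.div_top]
    exact zero_le
  · -- main case
    have hA12ne : A ^ ((1:ℝ)/2) ≠ 0 := by
      simp only [ne_eq, ENNReal.rpow_eq_zero_iff, not_or]
      exact ⟨fun h' => hA0 h'.1, fun h' => hAt h'.1⟩
    have hA12t : A ^ ((1:ℝ)/2) ≠ ∞ := ENNReal.rpow_ne_top_of_nonneg (by norm_num) hAt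
    have hcne : ENNReal.ofReal c' ≠ 0 := by simp [hc'0]
    set s : ℝ≥0∞ := 2 * ENNReal.ofReal c' * A ^ ((1:ℝ)/2) with hs
    have hs0 : s ≠ 0 := by
      rw [hs]
      simp only [ne_eq, mul_eq_zero, not_or]
      exact ⟨⟨two_ne_zero, hcne⟩, hA12ne⟩
    have hst : s ≠ ∞ := by
      rw [hs]
      exact ENNReal.mul_ne_top (ENNReal.mul_ne_top ENNReal.ofNat_ne_top ENNReal.ofReal_ne_top) hA12t
    have hcheb : s * ν {x | s ≤ F x} ≤ ∫⁻ x in Q, F x := by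
      rw [← hν]
      exact mul_meas_ge_le_lintegral₀ hFm.aemeasurable s
    have hhalf : ν {x | s ≤ F x} ≤ volume Q / 2 := by
      rw [← ENNReal.mul_le_mul_iff_right hs0 hst]
      have hs2 : s * (volume Q / 2) = ENNReal.ofReal c' * volume Q * A ^ ((1:ℝ)/2) := by
        calc s * (volume Q / 2)
            = (ENNReal.ofReal c' * A ^ ((1:ℝ)/2)) * (2 * (volume Q / 2)) := by rw [hs]; ring
          _ = (ENNReal.ofReal c' * A ^ ((1:ℝ)/2)) * volume Q := by
              rw [ENNReal.mul_div_cancel two_ne_zero ENNReal.ofNat_ne_top]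
          _ = ENNReal.ofReal c' * volume Q * A ^ ((1:ℝ)/2) := by ring
      rw [hs2]
      exact le_trans hcheb hFi
    have hcompl : volume Q / 2 ≤ ν {x | F x < s} := by
      have hun : volume Q ≤ ν {x | s ≤ F x} + ν {x | F x < s} := by
        have hcov : (Set.univ : Set (Fin n → ℝ)) ⊆ {x | s ≤ F x} ∪ {x | F x < s} :=
          fun x _ => (le_or_gt s (F x)).imp id id
        calc volume Q = ν Set.univ := by rw [hν, Measure.restrict_apply_univ]
          _ ≤ ν ({x | s ≤ F x} ∪ {x | F x < s}) := measure_mono hcov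
          _ ≤ ν {x | s ≤ F x} + ν {x | F x < s} := measure_union_le _ _
      calc volume Q / 2 = volume Q - volume Q / 2 := (ENNReal.sub_half hQt).symm
        _ ≤ volume Q - ν {x | s ≤ F x} := tsub_le_tsub_left hhalf _
        _ ≤ ν {x | F x < s} := tsub_le_iff_left.2 hun
    set T : ℝ≥0∞ := (s ^ (2:ℝ)) ^ (-lam) with hT
    have hTlow : T * (volume Q / 2) ≤ ∫⁻ x in Q, v x := by
      have hmeas : MeasurableSet {x | F x < s} := measurableSet_lt hFm measurable_const
      calc T * (volume Q / 2) ≤ T * ν {x | F x < s} := mul_le_mul_right hcompl _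
        _ = ∫⁻ x, {x | F x < s}.indicator (fun _ => T) x ∂ν := by
            rw [lintegral_indicator hmeas, setLIntegral_const, mul_comm]
        _ ≤ ∫⁻ x, v x ∂ν := by
            apply lintegral_mono_ae
            filter_upwards [hFb] with x hx
            by_cases hxs : x ∈ {x | F x < s}
            · rw [Set.indicator_of_mem hxs]
              have hMs : M x ≤ s ^ (2:ℝ) := by
                have h1 : M x ^ ((1:ℝ)/2) ≤ s := le_of_lt (lt_of_le_of_lt hx hxs)
                calc M x = (M x ^ ((1:ℝ)/2)) ^ (2:ℝ) := by
                      rw [← ENNReal.rpow_mul]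
                      norm_num
                  _ ≤ s ^ (2:ℝ) := ENNReal.rpow_le_rpow h1 (by norm_num)
              show T ≤ M x ^ (-lam)
              rw [hT, ENNReal.rpow_neg, ENNReal.rpow_neg]
              exact ENNReal.inv_le_inv.2 (ENNReal.rpow_le_rpow hMs hlam.le)
            · rw [Set.indicator_of_notMem hxs]
              exact zero_le
        _ = ∫⁻ x in Q, v x := by rw [hν]
    have hlavg : T / 2 ≤ lavg v Q := by
      rw [lavg, ENNReal.le_div_iff_mul_le (Or.inl hQ0) (Or.inl hQt)]
      calc T / 2 * volume Q = T * (volume Q / 2) := by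
            rw [div_eq_mul_inv, div_eq_mul_inv]
            ring
        _ ≤ ∫⁻ x in Q, v x := hTlow
    -- final computation
    have hTinv : T⁻¹ = ENNReal.ofReal ((4 * c'^2) ^ lam) * A ^ lam := by
      have hs2eq : s ^ (2:ℝ) = ENNReal.ofReal (4 * c'^2) * A := by
        rw [hs, ENNReal.mul_rpow_of_nonneg _ _ (by norm_num : (0:ℝ) ≤ 2),
          ENNReal.mul_rpow_of_nonneg _ _ (by norm_num : (0:ℝ) ≤ 2),
          ← ENNReal.rpow_mul A]
        norm_num
        rw [ENNReal.ofReal_pow hc'0.le]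
      rw [hT, ENNReal.rpow_neg, inv_inv, hs2eq,
        ENNReal.mul_rpow_of_nonneg _ _ hlam.le,
        ENNReal.ofReal_rpow_of_pos (by positivity)]
    calc essSup v ν / lavg v Q ≤ A ^ (-lam) / (T / 2) := ENNReal.div_le_div hsup hlavg
      _ = A ^ (-lam) * T⁻¹ * 2 := by
          rw [div_eq_mul_inv, div_eq_mul_inv, ENNReal.mul_inv (Or.inr (by simp : (2:ℝ≥0∞)⁻¹ ≠ ∞))
            (Or.inr (by simp : (2:ℝ≥0∞)⁻¹ ≠ 0)), inv_inv]
          ring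
      _ = ENNReal.ofReal ((4 * c'^2) ^ lam) * (A ^ (-lam) * A ^ lam) * 2 := by
          rw [hTinv]; ring
      _ = ENNReal.ofReal ((4 * c'^2) ^ lam) * 2 := by
          rw [← ENNReal.rpow_add _ _ hA0 hAt]
          norm_num
      _ = ENNReal.ofReal (2 * (4 * c'^2) ^ lam) := by
          rw [ENNReal.ofReal_mul (by norm_num), ENNReal.ofReal_ofNat]
          ring
end CRaux

/-- For a Young function `Φ` and `w ≥ 0` with `M_Φ w < ∞` a.e.:
`[(M_Φ w)^δ]_{A₁} ≤ c(n,δ)` for every `0 < δ < 1`, and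
`[(M_Φ w)^{−λ}]_{RH_∞} ≤ c(n,λ)` for every `λ > 0`. -/
theorem orlicz_maximal_A1_and_RHinfty (n : ℕ) :
    (∀ δ : ℝ, 0 < δ → δ < 1 → ∃ c : ℝ, 0 < c ∧
      ∀ (Φ : YoungFunction) (w : (Fin n → ℝ) → ℝ), Measurable w → (∀ x, 0 ≤ w x) →
        (∀ᵐ x, MOrlicz Φ.toFun w x < ⊤) →
        A1Const (fun x => MOrlicz Φ.toFun w x ^ δ) ≤ ENNReal.ofReal c) ∧
    (∀ lam : ℝ, 0 < lam → ∃ c : ℝ, 0 < c ∧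
      ∀ (Φ : YoungFunction) (w : (Fin n → ℝ) → ℝ), Measurable w → (∀ x, 0 ≤ w x) →
        (∀ᵐ x, MOrlicz Φ.toFun w x < ⊤) →
        RHinftyConst (fun x => MOrlicz Φ.toFun w x ^ (-lam)) ≤ ENNReal.ofReal c) := by
  constructor
  · intro δ hδ0 hδ1
    refine ⟨CRaux.Cmain n δ, CRaux.Cmain_pos n hδ0 hδ1, ?_⟩
    intro Φ w hw _ hfin
    rw [A1Const]
    refine iSup_le fun Q => iSup_le fun hQc => ?_
    obtain ⟨a, h, hh, rfl⟩ := hQc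
    exact CRaux.A1_per_cube hw hfin hδ0 hδ1 a hh
  · intro lam hlam
    have hc'0 : (0:ℝ) < CRaux.Cmain n (1/2) :=
      CRaux.Cmain_pos n (by norm_num) (by norm_num)
    have h4 : (0:ℝ) < 4 * (CRaux.Cmain n (1/2))^2 := by nlinarith
    refine ⟨2 * (4 * (CRaux.Cmain n (1/2))^2) ^ lam,
      mul_pos two_pos (Real.rpow_pos_of_pos h4 lam), ?_⟩
    intro Φ w hw _ hfin
    rw [RHinftyConst]
    refine iSup_le fun Q => iSup_le fun hQc => ?_
    obtain ⟨a, h, hh, rfl⟩ := hQc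
    exact CRaux.RH_per_cube hw hfin hlam a hh

end
end
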